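/- arXiv:1910.04445 — 6 statements merged into one kernel-verified Lean document; each statement's English description precedes it below -/
import Mathlib

section
/- Let α > 0 and μ > −1, and define θ(n) = [Γ(1/(μ+1)+α+1)·Γ(n/(μ+1)+1)] / [n·Γ(n/(μ+1)+α+1)·Γ(1/(μ+1)+1)] for n ≥ 1. Then the sequence θ(n) is non-increasing: for all n ≥ 1, θ(n+1) ≤ θ(n). -/
open Real

/-- Gamma ratio monotonicity: for `0 < a ≤ b` and `ε > 0`,
`Γ(a+ε) * Γ(b) ≤ Γ(a) * Γ(b+ε)`. -/
lemma gamma_ratio_mono {a b ε : ℝ} (ha : 0 < a) (hab : a < b) (hε : 0 < ε) :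
    Real.Gamma (a + ε) * Real.Gamma b ≤ Real.Gamma a * Real.Gamma (b + ε) := by
  have hb : 0 < b := ha.trans hab
  have hconv := Real.convexOn_log_Gamma
  have haS : a ∈ Set.Ioi (0:ℝ) := ha
  have hbS : b ∈ Set.Ioi (0:ℝ) := hb
  have haeS : a + ε ∈ Set.Ioi (0:ℝ) := by simp [Set.mem_Ioi]; linarith
  have hbeS : b + ε ∈ Set.Ioi (0:ℝ) := by simp [Set.mem_Ioi]; linarith
  set f : ℝ → ℝ := Real.log ∘ Real.Gamma
  -- slope(a, a+ε) ≤ slope(a, b+ε)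
  have h1 : (f (a+ε) - f a) / (a + ε - a) ≤ (f (b+ε) - f a) / (b + ε - a) :=
    hconv.secant_mono haS haeS hbeS (by linarith) (by linarith) (by linarith)
  -- slope(b+ε, a) ≤ slope(b+ε, b)
  have h2 : (f a - f (b+ε)) / (a - (b+ε)) ≤ (f b - f (b+ε)) / (b - (b+ε)) :=
    hconv.secant_mono hbeS haS hbS (by linarith) (by linarith) (by linarith)
  have h2' : (f (b+ε) - f a) / (b + ε - a) ≤ (f (b+ε) - f b) / ε := by
    have e1 : (f a - f (b+ε)) / (a - (b+ε)) = (f (b+ε) - f a) / (b + ε - a) := by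
      rw [← neg_div_neg_eq]; ring_nf
    have e2 : (f b - f (b+ε)) / (b - (b+ε)) = (f (b+ε) - f b) / ε := by
      rw [← neg_div_neg_eq]; ring_nf
    rw [e1, e2] at h2; exact h2
  have hkey : (f (a+ε) - f a) / ε ≤ (f (b+ε) - f b) / ε := by
    have : (f (a+ε) - f a) / (a + ε - a) = (f (a+ε) - f a) / ε := by ring_nf
    calc (f (a+ε) - f a) / ε = (f (a+ε) - f a) / (a + ε - a) := by ring_nf
      _ ≤ (f (b+ε) - f a) / (b + ε - a) := h1
      _ ≤ (f (b+ε) - f b) / ε := h2'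
  have hsum : f (a+ε) + f b ≤ f a + f (b+ε) := by
    have := (div_le_div_iff_of_pos_right hε).mp hkey
    linarith
  have hGa := Real.Gamma_pos_of_pos ha
  have hGb := Real.Gamma_pos_of_pos hb
  have hGae := Real.Gamma_pos_of_pos (show (0:ℝ) < a + ε by linarith)
  have hGbe := Real.Gamma_pos_of_pos (show (0:ℝ) < b + ε by linarith)
  have : Real.log (Real.Gamma (a+ε) * Real.Gamma b) ≤
      Real.log (Real.Gamma a * Real.Gamma (b+ε)) := by
    rw [Real.log_mul hGae.ne' hGb.ne', Real.log_mul hGa.ne' hGbe.ne']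
    exact hsum
  exact (Real.log_le_log_iff (by positivity) (by positivity)).mp this

theorem theta_antitone (α μ : ℝ) (hα : 0 < α) (hμ : -1 < μ)
    (θ : ℕ → ℝ)
    (hθ : ∀ n : ℕ, θ n =
      (Real.Gamma (1 / (μ + 1) + α + 1) * Real.Gamma ((n : ℝ) / (μ + 1) + 1)) /
        ((n : ℝ) * Real.Gamma ((n : ℝ) / (μ + 1) + α + 1) * Real.Gamma (1 / (μ + 1) + 1))) :
    ∀ n : ℕ, 1 ≤ n → θ (n + 1) ≤ θ n := by
  intro n hn
  have hκ : (0:ℝ) < μ + 1 := by linarith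
  have hn' : (0:ℝ) < n := by exact_mod_cast hn
  set x : ℝ := (n : ℝ) / (μ + 1) with hx
  set y : ℝ := ((n : ℝ) + 1) / (μ + 1) with hy
  have hx0 : 0 < x := by positivity
  have hxy : x < y := by
    rw [hx, hy]
    exact (div_lt_div_iff_of_pos_right hκ).mpr (by linarith)
  have hy0 : 0 < y := hx0.trans hxy
  have hkey := gamma_ratio_mono (a := x + 1) (b := y + 1) (ε := α)
    (by linarith) (by linarith) hα
  have e1 : x + 1 + α = x + α + 1 := by ring
  have e2 : y + 1 + α = y + α + 1 := by ring
  rw [e1, e2] at hkey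
  rw [hθ n, hθ (n+1)]
  push_cast
  have hG1 : 0 < Real.Gamma (1 / (μ + 1) + α + 1) := by
    apply Real.Gamma_pos_of_pos; positivity
  have hG2 : 0 < Real.Gamma (1 / (μ + 1) + 1) := by
    apply Real.Gamma_pos_of_pos; positivity
  have hGx1 : 0 < Real.Gamma (x + 1) := Real.Gamma_pos_of_pos (by linarith)
  have hGy1 : 0 < Real.Gamma (y + 1) := Real.Gamma_pos_of_pos (by linarith)
  have hGxa : 0 < Real.Gamma (x + α + 1) := Real.Gamma_pos_of_pos (by linarith)
  have hGya : 0 < Real.Gamma (y + α + 1) := Real.Gamma_pos_of_pos (by linarith)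
  rw [← hx, ← hy, div_le_div_iff₀ (by positivity) (by positivity)]
  nlinarith [mul_le_mul hkey (le_refl ((n:ℝ) * Real.Gamma (1 / (μ + 1) + α + 1) * Real.Gamma (1 / (μ + 1) + 1))) (by positivity) (by positivity),
    mul_pos (mul_pos hG1 hG2) (mul_pos hGx1 hGya)]
end

section
/- Let α < 1 and β < 1. Suppose p and q are analytic on the open unit disk 𝔻 with p(0) = q(0) = 1, Re(p(z)) > α and Re(q(z)) > β for all z ∈ 𝔻. Then the Hadamard product (p∗q)(z) = ∑_{n≥0} p_n q_n z^n (where p(z) = ∑ p_n z^n, q(z) = ∑ q_n z^n) satisfies Re((p∗q)(z)) > 1 − 2(1−α)(1−β) for all z ∈ 𝔻. -/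
open Complex Metric intervalIntegral Real MeasureTheory

private lemma norm_exp_int' (c : ℂ) (k : ℤ) (θ : ℝ) : ‖c * Complex.exp (k * θ * I)‖ = ‖c‖ := by
  rw [norm_mul]
  have : (k : ℂ) * θ * I = (((k : ℝ) * θ : ℝ) : ℂ) * I := by push_cast; ring
  simp only [this, Complex.norm_exp_ofReal_mul_I, mul_one]

private lemma cont_exp_int' (c : ℂ) (k : ℤ) :
    Continuous (fun θ : ℝ => c * Complex.exp (k * θ * I)) := by fun_prop

private lemma int_exp' (k : ℤ) : (∫ θ in (0:ℝ)..(2*π), Complex.exp (k * θ * I))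
    = if k = 0 then (2*π : ℂ) else 0 := by
  split_ifs with h
  · subst h
    simp
  · have hc : (k : ℂ) * I ≠ 0 := by
      simp [Complex.ext_iff, h]
    have : ∀ θ : ℝ, (k:ℂ) * θ * I = (k * I) * θ := by intro θ; ring
    simp_rw [this]
    rw [integral_exp_mul_complex hc]
    have h1 : (k:ℂ) * I * (2*π:ℝ) = k * (2*π*I) := by push_cast; ring
    have h2 : (k:ℂ) * I * (0:ℝ) = 0 := by simp
    rw [h1, h2, Complex.exp_int_mul_two_pi_mul_I, Complex.exp_zero, sub_self, zero_div]

private lemma swap_lem' (c : ℕ → ℂ) (hc : Summable fun n => ‖c n‖) (k : ℕ → ℤ) (g : ℝ → ℂ)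
    (hg : Continuous g) (M : ℝ) (hM : ∀ θ, ‖g θ‖ ≤ M) :
    (∫ θ in (0:ℝ)..(2*π), (∑' n, c n * Complex.exp (k n * θ * I)) * g θ)
    = ∑' n, ∫ θ in (0:ℝ)..(2*π), c n * Complex.exp (k n * θ * I) * g θ := by
  have h2π : (0:ℝ) ≤ 2*π := by positivity
  have hsum : ∀ θ : ℝ, Summable fun n => c n * Complex.exp (k n * θ * I) := by
    intro θ
    apply Summable.of_norm
    simpa only [norm_exp_int'] using hc
  have hFcont : ∀ n, Continuous fun θ : ℝ => c n * Complex.exp (k n * θ * I) * g θ :=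
    fun n => (cont_exp_int' (c n) (k n)).mul hg
  have hInt : ∀ n, Integrable (fun θ : ℝ => c n * Complex.exp (k n * θ * I) * g θ)
      (volume.restrict (Set.Ioc (0:ℝ) (2*π))) := fun n => (hFcont n).integrableOn_Ioc
  have hM0 : 0 ≤ M := le_trans (norm_nonneg _) (hM 0)
  have hnormint : ∀ n, (∫ θ, ‖c n * Complex.exp (k n * θ * I) * g θ‖
      ∂(volume.restrict (Set.Ioc (0:ℝ) (2*π)))) ≤ 2*π * (‖c n‖ * M) := by
    intro n
    have : ∀ θ : ℝ, ‖c n * Complex.exp (k n * θ * I) * g θ‖ ≤ ‖c n‖ * M := by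
      intro θ
      rw [norm_mul, norm_exp_int']
      exact mul_le_mul_of_nonneg_left (hM θ) (norm_nonneg _)
    calc (∫ θ, ‖c n * Complex.exp (k n * θ * I) * g θ‖
        ∂(volume.restrict (Set.Ioc (0:ℝ) (2*π))))
        ≤ ∫ _, ‖c n‖ * M ∂(volume.restrict (Set.Ioc (0:ℝ) (2*π))) := by
          apply integral_mono_of_nonneg (Filter.Eventually.of_forall fun θ => norm_nonneg _)
            (integrableOn_const measure_Ioc_lt_top.ne)
          exact Filter.Eventually.of_forall this
      _ = 2*π * (‖c n‖ * M) := by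
          rw [MeasureTheory.integral_const]
          simp [Real.volume_Ioc, ENNReal.toReal_ofReal h2π, Real.pi_pos.le]
  have hsumint : Summable fun n => ∫ θ, ‖c n * Complex.exp (k n * θ * I) * g θ‖
      ∂(volume.restrict (Set.Ioc (0:ℝ) (2*π))) := by
    apply Summable.of_nonneg_of_le (fun n => integral_nonneg fun θ => norm_nonneg _) hnormint
    simpa [mul_assoc] using (hc.mul_right M).mul_left (2*π)
  rw [integral_of_le h2π]
  have := (MeasureTheory.integral_tsum_of_summable_integral_norm hInt hsumint).symm
  simp_rw [integral_of_le h2π]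
  rw [← this]
  congr 1
  ext θ
  exact ((hsum θ).hasSum.mul_right (g θ)).tsum_eq.symm

private lemma integral_double' (a b : ℕ → ℂ) (k l : ℕ → ℤ)
    (ha : Summable fun n => ‖a n‖) (hb : Summable fun m => ‖b m‖) :
    (∫ θ in (0:ℝ)..(2*π),
      (∑' n, a n * Complex.exp (k n * θ * I)) * (∑' m, b m * Complex.exp (l m * θ * I)))
    = 2*π * ∑' n, ∑' m, if k n + l m = 0 then a n * b m else 0 := by
  set B : ℝ → ℂ := fun θ => ∑' m, b m * Complex.exp (l m * θ * I) with hB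
  have hBc : Continuous B :=
    continuous_tsum (fun m => cont_exp_int' (b m) (l m)) hb
      (fun m θ => le_of_eq (norm_exp_int' (b m) (l m) θ))
  have hBM : ∀ θ, ‖B θ‖ ≤ ∑' m, ‖b m‖ := by
    intro θ
    calc ‖B θ‖ ≤ ∑' m, ‖b m * Complex.exp (l m * θ * I)‖ :=
          norm_tsum_le_tsum_norm (by simpa only [norm_exp_int'] using hb)
      _ = ∑' m, ‖b m‖ := by simp_rw [norm_exp_int']
  rw [swap_lem' a ha k B hBc _ hBM]
  have inner : ∀ n, (∫ θ in (0:ℝ)..(2*π), a n * Complex.exp (k n * θ * I) * B θ)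
      = ∑' m, (2*π : ℂ) * (if k n + l m = 0 then a n * b m else 0) := by
    intro n
    have comm : ∀ θ : ℝ, a n * Complex.exp (k n * θ * I) * B θ
        = B θ * (a n * Complex.exp (k n * θ * I)) := fun θ => mul_comm _ _
    simp_rw [comm, hB]
    rw [swap_lem' b hb l _ (cont_exp_int' (a n) (k n)) ‖a n‖
      (fun θ => le_of_eq (norm_exp_int' (a n) (k n) θ))]
    congr 1
    ext m
    have key : ∀ θ : ℝ, b m * Complex.exp (l m * θ * I) * (a n * Complex.exp (k n * θ * I))
        = (a n * b m) * Complex.exp ((k n + l m : ℤ) * θ * I) := by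
      intro θ
      rw [show ((k n + l m : ℤ) : ℂ) * θ * I = (k n) * θ * I + (l m) * θ * I by push_cast; ring,
        Complex.exp_add]
      ring
    simp_rw [key]
    rw [intervalIntegral.integral_const_mul, int_exp']
    split_ifs <;> ring
  simp_rw [inner, tsum_mul_left]

private lemma summable_norm_sub_delta (c : ℕ → ℂ) (hc : Summable fun n => ‖c n‖) (x : ℂ) :
    Summable (fun n => ‖c n - (if n = 0 then x else 0)‖) := by
  apply Summable.of_nonneg_of_le (fun n => norm_nonneg _) (fun n => norm_sub_le _ _)
  apply hc.add
  apply summable_of_ne_finset_zero (s := {0})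
  intro n hn
  simp only [Finset.mem_singleton] at hn
  simp [hn]

private lemma geom_bound' (c : ℕ → ℂ) (C ρ r₂ : ℝ) (hr20 : 0 < r₂) (hC : 0 ≤ C) (hρ0 : 0 ≤ ρ)
    (hρr : ρ < r₂) (hbd : ∀ n, ‖c n‖ * r₂^n ≤ C) : Summable (fun n => ‖c n‖ * ρ^n) := by
  apply Summable.of_nonneg_of_le (fun n => by positivity)
    (f := fun n => C * (ρ/r₂)^n)
  · intro n
    have h1 : ‖c n‖ * ρ^n = (‖c n‖ * r₂^n) * (ρ/r₂)^n := by
      rw [div_pow]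
      have hne : (r₂:ℝ)^n ≠ 0 := by positivity
      field_simp
    rw [h1]
    exact mul_le_mul_of_nonneg_right (hbd n) (by positivity)
  · exact (summable_geometric_of_lt_one (by positivity)
      ((div_lt_one hr20).2 hρr)).mul_left C

theorem stankiewicz_convolution (α β : ℝ) (hα : α < 1) (hβ : β < 1)
    (p q : ℂ → ℂ) (pc qc : ℕ → ℂ)
    (hpc0 : pc 0 = 1) (hqc0 : qc 0 = 1)
    (hp : ∀ z ∈ ball (0 : ℂ) 1, HasSum (fun n : ℕ => pc n * z ^ n) (p z))
    (hq : ∀ z ∈ ball (0 : ℂ) 1, HasSum (fun n : ℕ => qc n * z ^ n) (q z))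
    (hpre : ∀ z ∈ ball (0 : ℂ) 1, α < (p z).re)
    (hqre : ∀ z ∈ ball (0 : ℂ) 1, β < (q z).re) :
    ∀ z ∈ ball (0 : ℂ) 1, ∃ s : ℂ,
      HasSum (fun n : ℕ => pc n * qc n * z ^ n) s ∧
      1 - 2 * (1 - α) * (1 - β) < s.re := by
  intro z hz
  rw [mem_ball_zero_iff] at hz
  have hz0 : (0:ℝ) ≤ ‖z‖ := norm_nonneg z
  set r : ℝ := (Real.sqrt ‖z‖ + 1) / 2 with hrdef
  have hs0 : 0 ≤ Real.sqrt ‖z‖ := Real.sqrt_nonneg _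
  have hs1 : Real.sqrt ‖z‖ < 1 := by
    rw [show (1:ℝ) = Real.sqrt 1 by simp]
    exact Real.sqrt_lt_sqrt hz0 hz
  have hr0 : 0 < r := by rw [hrdef]; linarith
  have hr1 : r < 1 := by rw [hrdef]; linarith
  have hsr : Real.sqrt ‖z‖ < r := by rw [hrdef]; linarith
  have hzr : ‖z‖ < r^2 := by
    calc ‖z‖ = Real.sqrt ‖z‖ ^ 2 := (Real.sq_sqrt hz0).symm
      _ < r^2 := by nlinarith
  set r₂ : ℝ := (r + 1) / 2 with hr2def
  have hr2a : r < r₂ := by rw [hr2def]; linarith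
  have hr2b : r₂ < 1 := by rw [hr2def]; linarith
  have hr20 : 0 < r₂ := lt_trans hr0 hr2a
  have hrC : (r : ℂ) ≠ 0 := by
    simpa using hr0.ne'
  set w : ℂ := z / (r : ℂ) with hwdef
  have hrw : (r : ℂ) * w = z := by
    rw [hwdef, mul_comm, div_mul_cancel₀ z hrC]
  have hwnorm : ‖w‖ = ‖z‖ / r := by
    rw [hwdef, norm_div, Complex.norm_real, Real.norm_eq_abs, abs_of_pos hr0]
  have hwr : ‖w‖ < r := by
    rw [hwnorm, div_lt_iff₀ hr0]
    nlinarith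
  have hw1 : ‖w‖ < 1 := lt_trans hwr hr1
  have hw0 : 0 ≤ ‖w‖ := norm_nonneg w
  -- coefficient bounds at radius r₂
  have hmem2 : ((r₂ : ℂ)) ∈ ball (0:ℂ) 1 := by
    rw [mem_ball_zero_iff, Complex.norm_real, Real.norm_eq_abs, abs_of_pos hr20]
    exact hr2b
  have getC : ∀ (c : ℕ → ℂ), Summable (fun n => c n * (r₂:ℂ)^n) →
      ∃ C : ℝ, 0 ≤ C ∧ ∀ n, ‖c n‖ * r₂^n ≤ C := by
    intro c hsum
    have ht : Filter.Tendsto (fun n => ‖c n * (r₂:ℂ)^n‖) Filter.atTop (nhds 0) := by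
      simpa using hsum.tendsto_atTop_zero.norm
    obtain ⟨C, hC⟩ := ht.bddAbove_range
    refine ⟨C, le_trans (norm_nonneg _) (hC (Set.mem_range_self 0)), fun n => ?_⟩
    have := hC (Set.mem_range_self n)
    simpa [norm_mul, norm_pow, Complex.norm_real, Real.norm_eq_abs, abs_of_pos hr20] using this
  obtain ⟨Cp, hCp0, hCp⟩ := getC pc (hp _ hmem2).summable
  obtain ⟨Cq, hCq0, hCq⟩ := getC qc (hq _ hmem2).summable
  clear_value w r₂ r
  clear hrdef hr2def hwdef hs0 hs1 hsr getC
  -- summability of coefficient sequences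
  set a : ℕ → ℂ := fun n => pc n * (r:ℂ)^n with hadef
  set b : ℕ → ℂ := fun m => qc m * w^m with hbdef
  have hanorm : ∀ n, ‖a n‖ = ‖pc n‖ * r^n := by
    intro n
    rw [hadef]
    simp [norm_mul, norm_pow, Complex.norm_real, Real.norm_eq_abs, abs_of_pos hr0]
  have hbnorm : ∀ m, ‖b m‖ = ‖qc m‖ * ‖w‖^m := by
    intro m
    rw [hbdef]
    simp [norm_mul, norm_pow]
  have Sa : Summable (fun n => ‖a n‖) := by
    simp_rw [hanorm]
    exact geom_bound' pc Cp r r₂ hr20 hCp0 hr0.le hr2a hCp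
  have Sb : Summable (fun m => ‖b m‖) := by
    simp_rw [hbnorm]
    exact geom_bound' qc Cq ‖w‖ r₂ hr20 hCq0 hw0 (lt_trans hwr hr2a) hCq
  -- summability of the Hadamard product series
  have Ssum : Summable (fun n : ℕ => pc n * qc n * z ^ n) := by
    apply Summable.of_norm
    apply Summable.of_nonneg_of_le (fun n => norm_nonneg _)
      (f := fun n => (Cp * Cq) * (‖z‖/(r₂*r₂))^n)
    · intro n
      have h1 : ‖pc n * qc n * z^n‖ = (‖pc n‖*r₂^n) * (‖qc n‖*r₂^n) * (‖z‖/(r₂*r₂))^n := by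
        have hne : (r₂:ℝ)^n * r₂^n ≠ 0 := by positivity
        rw [norm_mul, norm_mul, norm_pow, div_pow, mul_pow]
        calc ‖pc n‖ * ‖qc n‖ * ‖z‖^n
            = ‖pc n‖ * ‖qc n‖ * (‖z‖^n / (r₂^n * r₂^n) * (r₂^n * r₂^n)) := by
              rw [div_mul_cancel₀ _ hne]
          _ = ‖pc n‖ * r₂^n * (‖qc n‖ * r₂^n) * (‖z‖^n / (r₂^n * r₂^n)) := by ring
      rw [h1]
      apply mul_le_mul_of_nonneg_right _ (by positivity)
      exact mul_le_mul (hCp n) (hCq n) (by positivity) hCp0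
    · apply Summable.mul_left
      apply summable_geometric_of_lt_one (by positivity)
      rw [div_lt_one (by positivity)]
      nlinarith
  refine ⟨∑' n, pc n * qc n * z ^ n, Ssum.hasSum, ?_⟩
  set s : ℂ := ∑' n, pc n * qc n * z ^ n with hsdef
  -- coefficient sequences for the three trigonometric series
  set c1 : ℕ → ℂ := fun n => a n - (if n = 0 then (α:ℂ) else 0) with hc1def
  set c2 : ℕ → ℂ := fun n => (starRingEnd ℂ) (a n) - (if n = 0 then (α:ℂ) else 0) with hc2def
  set d : ℕ → ℂ := fun m => 2 * b m - (if m = 0 then (2*(β:ℂ)) else 0) with hddef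
  have Sconja : Summable (fun n => ‖(starRingEnd ℂ) (a n)‖) := by
    simpa only [RCLike.norm_conj] using Sa
  have S2b : Summable (fun m => ‖2 * b m‖) := by
    simp_rw [norm_mul]
    exact Sb.mul_left _
  have Sc1 : Summable (fun n => ‖c1 n‖) := summable_norm_sub_delta a Sa _
  have Sc2 : Summable (fun n => ‖c2 n‖) := summable_norm_sub_delta _ Sconja _
  have Sd : Summable (fun m => ‖d m‖) := summable_norm_sub_delta _ S2b _
  -- the functions on the circle
  set A : ℝ → ℂ := fun θ => ∑' n, a n * Complex.exp ((n:ℤ) * θ * I) with hAdef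
  set B : ℝ → ℂ := fun θ => ∑' m, b m * Complex.exp (((-(m:ℤ) : ℤ) : ℂ) * θ * I) with hBdef
  set C1 : ℝ → ℂ := fun θ => ∑' n, c1 n * Complex.exp ((n:ℤ) * θ * I) with hC1def
  set C2 : ℝ → ℂ := fun θ => ∑' n, c2 n * Complex.exp (((-(n:ℤ) : ℤ) : ℂ) * θ * I) with hC2def
  set D : ℝ → ℂ := fun θ => ∑' m, d m * Complex.exp (((-(m:ℤ) : ℤ) : ℂ) * θ * I) with hDdef
  have sumterm : ∀ (c : ℕ → ℂ), Summable (fun n => ‖c n‖) → ∀ (k : ℕ → ℤ) (θ:ℝ),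
      Summable (fun n => c n * Complex.exp (k n * θ * I)) := by
    intro c hc k θ
    apply Summable.of_norm
    simpa only [norm_exp_int'] using hc
  have sumdelta : ∀ (x : ℂ) (k : ℕ → ℤ) (θ:ℝ),
      Summable (fun n => (if n = 0 then x else 0) * Complex.exp (k n * θ * I)) := by
    intro x k θ
    apply summable_of_ne_finset_zero (s := {0})
    intro n hn
    simp only [Finset.mem_singleton] at hn
    simp [hn]
  have deltasum : ∀ (x : ℂ) (k : ℕ → ℤ) (θ:ℝ),
      (∑' n, (if n = 0 then x else 0) * Complex.exp (k n * θ * I))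
        = x * Complex.exp ((k 0) * θ * I) := by
    intro x k θ
    rw [tsum_eq_single 0]
    · simp
    · intro n hn
      simp [hn]
  -- pointwise identities
  have hC1A : ∀ θ:ℝ, C1 θ = A θ - (α:ℂ) := by
    intro θ
    simp only [hC1def, hc1def, hAdef]
    simp_rw [sub_mul]
    rw [Summable.tsum_sub (sumterm a Sa (fun n => (n:ℤ)) θ) (sumdelta (α:ℂ) (fun n => (n:ℤ)) θ), deltasum (α:ℂ) (fun n => (n:ℤ)) θ]
    simp
  have hconjA : ∀ θ:ℝ, (starRingEnd ℂ) (A θ)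
      = ∑' n, (starRingEnd ℂ) (a n) * Complex.exp (((-(n:ℤ) : ℤ) : ℂ) * θ * I) := by
    intro θ
    simp only [hAdef]
    rw [conj_tsum]
    apply tsum_congr
    intro n
    rw [map_mul]
    congr 1
    rw [← Complex.exp_conj]
    congr 1
    simp only [map_mul, Complex.conj_I, Complex.conj_ofReal, map_intCast]
    push_cast
    ring
  have hC2A : ∀ θ:ℝ, C2 θ = (starRingEnd ℂ) (A θ) - (α:ℂ) := by
    intro θ
    simp only [hC2def, hc2def]
    simp_rw [sub_mul]
    rw [Summable.tsum_sub (sumterm _ Sconja (fun n => -(n:ℤ)) θ) (sumdelta (α:ℂ) (fun n => -(n:ℤ)) θ), deltasum (α:ℂ) (fun n => -(n:ℤ)) θ, hconjA θ]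
    simp
  have hDB : ∀ θ:ℝ, D θ = 2 * B θ - 2*(β:ℂ) := by
    intro θ
    simp only [hDdef, hddef, hBdef]
    simp_rw [sub_mul]
    rw [Summable.tsum_sub (sumterm _ S2b (fun m => -(m:ℤ)) θ) (sumdelta (2*(β:ℂ)) (fun m => -(m:ℤ)) θ), deltasum (2*(β:ℂ)) (fun m => -(m:ℤ)) θ]
    simp_rw [mul_assoc]
    rw [tsum_mul_left]
    simp
  -- values on the circle
  have hmemA : ∀ θ:ℝ, ((r:ℂ) * Complex.exp ((θ:ℂ) * I)) ∈ ball (0:ℂ) 1 := by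
    intro θ
    rw [mem_ball_zero_iff, norm_mul]
    have h1 : ‖Complex.exp ((θ:ℂ) * I)‖ = 1 := by
      rw [Complex.norm_exp_ofReal_mul_I]
    rw [h1, mul_one, Complex.norm_real, Real.norm_eq_abs, abs_of_pos hr0]
    exact hr1
  have hmemB : ∀ θ:ℝ, (w * Complex.exp (-(θ:ℂ) * I)) ∈ ball (0:ℂ) 1 := by
    intro θ
    rw [mem_ball_zero_iff, norm_mul]
    have h1 : ‖Complex.exp (-(θ:ℂ) * I)‖ = 1 := by
      rw [show -(θ:ℂ) * I = ((-θ : ℝ):ℂ) * I by push_cast; ring]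
      rw [Complex.norm_exp_ofReal_mul_I]
    rw [h1, mul_one]
    exact hw1
  have hAval : ∀ θ:ℝ, A θ = p ((r:ℂ) * Complex.exp ((θ:ℂ) * I)) := by
    intro θ
    rw [← (hp _ (hmemA θ)).tsum_eq]
    simp only [hAdef, hadef]
    apply tsum_congr
    intro n
    rw [show ((n:ℤ):ℂ) * (θ:ℂ) * I = (n:ℕ) * ((θ:ℂ) * I) by push_cast; ring,
      Complex.exp_nat_mul, mul_pow]
    ring
  have hBval : ∀ θ:ℝ, B θ = q (w * Complex.exp (-(θ:ℂ) * I)) := by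
    intro θ
    rw [← (hq _ (hmemB θ)).tsum_eq]
    simp only [hBdef, hbdef]
    apply tsum_congr
    intro m
    rw [show ((-(m:ℤ):ℤ):ℂ) * (θ:ℂ) * I = (m:ℕ) * (-(θ:ℂ) * I) by push_cast; ring,
      Complex.exp_nat_mul, mul_pow]
    ring
  have hu : ∀ θ:ℝ, α < (A θ).re := by
    intro θ
    rw [hAval θ]
    exact hpre _ (hmemA θ)
  have hv : ∀ θ:ℝ, β < (B θ).re := by
    intro θ
    rw [hBval θ]
    exact hqre _ (hmemB θ)
  -- continuity
  have contSeries : ∀ (c : ℕ → ℂ) (k : ℕ → ℤ), Summable (fun n => ‖c n‖) →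
      Continuous (fun θ:ℝ => ∑' n, c n * Complex.exp (k n * θ * I)) := by
    intro c k hc
    exact continuous_tsum (fun n => cont_exp_int' (c n) (k n)) hc
      (fun n θ => le_of_eq (norm_exp_int' (c n) (k n) θ))
  have hC1c : Continuous C1 := by
    rw [hC1def]; exact contSeries c1 (fun n => (n:ℤ)) Sc1
  have hC2c : Continuous C2 := by
    rw [hC2def]; exact contSeries c2 (fun n => -(n:ℤ)) Sc2
  have hDc : Continuous D := by
    rw [hDdef]; exact contSeries d (fun m => -(m:ℤ)) Sd
  -- the main integral computation
  have hI1 : (∫ θ in (0:ℝ)..(2*π), C1 θ * D θ)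
      = 2*(π:ℂ) * (2*s + ((1-(α:ℂ))*(2-2*(β:ℂ)) - 2)) := by
    simp only [hC1def, hDdef]
    rw [integral_double' c1 d (fun n => (n:ℤ)) (fun m => -(m:ℤ)) Sc1 Sd]
    congr 1
    have hinner : ∀ n:ℕ, (∑' m:ℕ, if (n:ℤ) + (-(m:ℤ)) = 0 then c1 n * d m else 0)
        = c1 n * d n := by
      intro n
      rw [tsum_eq_single n]
      · simp
      · intro m hm
        rw [if_neg]
        omega
    rw [tsum_congr hinner]
    have hterm : ∀ n:ℕ, c1 n * d n
        = 2 * (pc n * qc n * z^n) + (if n = 0 then ((1-(α:ℂ))*(2-2*(β:ℂ)) - 2) else 0) := by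
      intro n
      simp only [hc1def, hddef, hadef, hbdef]
      by_cases hn : n = 0
      · subst hn
        simp [hpc0, hqc0]
        try ring
      · simp only [if_neg hn, sub_zero]
        have hzn : z^n = (r:ℂ)^n * w^n := by rw [← hrw, mul_pow]
        rw [hzn]
        ring
    rw [tsum_congr hterm, Summable.tsum_add (Ssum.mul_left 2) ?hsumdelta, tsum_mul_left, tsum_ite_eq,
      ← hsdef]
    case hsumdelta =>
      apply summable_of_ne_finset_zero (s := {0})
      intro n hn
      simp only [Finset.mem_singleton] at hn
      simp [hn]
  have hI2 : (∫ θ in (0:ℝ)..(2*π), C2 θ * D θ)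
      = 2*(π:ℂ) * ((1-(α:ℂ))*(2-2*(β:ℂ))) := by
    simp only [hC2def, hDdef]
    rw [integral_double' c2 d (fun n => -(n:ℤ)) (fun m => -(m:ℤ)) Sc2 Sd]
    congr 1
    rw [tsum_eq_single 0]
    · rw [tsum_eq_single 0]
      · simp [hc2def, hddef, hadef, hbdef, hpc0, hqc0]
        try ring
      · intro m hm
        rw [if_neg]
        omega
    · intro n hn
      have : ∀ m:ℕ, (if (-(n:ℤ)) + (-(m:ℤ)) = 0 then c2 n * d m else 0) = 0 := by
        intro m
        rw [if_neg]
        omega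
      rw [tsum_congr this, tsum_zero]
  have hI3 : (∫ θ in (0:ℝ)..(2*π), (C1 θ + C2 θ) * D θ)
      = (∫ θ in (0:ℝ)..(2*π), C1 θ * D θ) + ∫ θ in (0:ℝ)..(2*π), C2 θ * D θ := by
    simp_rw [add_mul]
    exact integral_add ((hC1c.mul hDc).intervalIntegrable _ _)
      ((hC2c.mul hDc).intervalIntegrable _ _)
  have hre := ContinuousLinearMap.intervalIntegral_comp_comm (μ := volume) Complex.reCLM
    (((hC1c.add hC2c).mul hDc).intervalIntegrable (0:ℝ) (2*π))
  simp only [Complex.reCLM_apply, Pi.add_apply, Pi.mul_apply] at hre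
  have hpos : 0 < ∫ θ in (0:ℝ)..(2*π), ((C1 θ + C2 θ) * D θ).re := by
    apply intervalIntegral_pos_of_pos_on
    · exact (Complex.continuous_re.comp ((hC1c.add hC2c).mul hDc)).intervalIntegrable _ _
    · intro θ _
      have huθ := hu θ
      have hvθ := hv θ
      have e1 : (C1 θ + C2 θ) * D θ
          = (((2*(A θ).re - 2*α : ℝ)):ℂ) * (2 * B θ - 2*(β:ℂ)) := by
        rw [hC1A θ, hC2A θ, hDB θ]
        have h2 := Complex.add_conj (A θ)
        have : A θ - (α:ℂ) + ((starRingEnd ℂ) (A θ) - (α:ℂ))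
            = (((2*(A θ).re - 2*α : ℝ)):ℂ) := by
          rw [show (((2*(A θ).re - 2*α : ℝ)):ℂ) = ((2*(A θ).re:ℝ):ℂ) - ((2*α:ℝ):ℂ) by
            push_cast; ring, ← h2]
          push_cast
          ring
        rw [this]
      rw [e1, Complex.re_ofReal_mul]
      have : (2 * B θ - 2*(β:ℂ)).re = 2*(B θ).re - 2*β := by simp
      rw [this]
      nlinarith
    · positivity
  -- putting it together
  rw [hI3, hI1, hI2] at hre
  have hreval : (2*(π:ℂ) * (2*s + ((1-(α:ℂ))*(2-2*(β:ℂ)) - 2))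
      + 2*(π:ℂ) * ((1-(α:ℂ))*(2-2*(β:ℂ)))).re
      = 2*π*(2*s.re + ((1-α)*(2-2*β) - 2)) + 2*π*((1-α)*(2-2*β)) := by
    have e2 : ((1:ℂ)-(α:ℂ))*(2-2*(β:ℂ)) - 2 = (((1-α)*(2-2*β) - 2 : ℝ):ℂ) := by
      push_cast; ring
    have e3 : ((1:ℂ)-(α:ℂ))*(2-2*(β:ℂ)) = (((1-α)*(2-2*β) : ℝ):ℂ) := by
      push_cast; ring
    rw [e2, e3, show (2*(π:ℂ)) = ((2*π : ℝ):ℂ) by push_cast; ring]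
    simp [Complex.add_re, Complex.re_ofReal_mul, Complex.add_im, Complex.mul_re]
    try ring
  rw [hreval] at hre
  rw [hre] at hpos
  by_contra hcon
  push_neg at hcon
  have hE : 2*s.re + ((1-α)*(2-2*β) - 2) + (1-α)*(2-2*β) ≤ 0 := by nlinarith
  have hcomb : 2*π*(2*s.re + ((1-α)*(2-2*β) - 2)) + 2*π*((1-α)*(2-2*β))
      = 2*π*(2*s.re + ((1-α)*(2-2*β) - 2) + (1-α)*(2-2*β)) := by ring
  rw [hcomb] at hpos
  have := mul_nonpos_of_nonneg_of_nonpos (by positivity : (0:ℝ) ≤ 2*π) hE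
  linarith
end

section
/- Let α > 1 and μ > −1, and let f(z) = z + ∑_{n≥2} a_n z^n satisfy |a_n| ≤ 2/n for all n ≥ 2. Define Ω f(z) = z + ∑_{n≥2} [Γ(1/(μ+1)+α+1)·Γ(n/(μ+1)+1)] / [Γ(n/(μ+1)+α+1)·Γ(1/(μ+1)+1)] · a_n z^n. Then the power series defining Ω f converges absolutely on the closed unit disk |z| ≤ 1, and Ω f is a bounded analytic function on the open unit disk 𝔻. -/
open Complex Metric

theorem omega_abs_conv_and_bounded (α μ : ℝ) (hα : 1 < α) (hμ : -1 < μ)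
    (a : ℕ → ℂ) (ha0 : a 0 = 0) (ha1 : a 1 = 1)
    (ha : ∀ n : ℕ, 2 ≤ n → ‖a n‖ ≤ 2 / n)
    (c : ℕ → ℝ)
    (hc : ∀ n : ℕ, c n =
      (Real.Gamma (1 / (μ + 1) + α + 1) * Real.Gamma ((n : ℝ) / (μ + 1) + 1)) /
        (Real.Gamma ((n : ℝ) / (μ + 1) + α + 1) * Real.Gamma (1 / (μ + 1) + 1)))
    (g : ℂ → ℂ)
    (hg : ∀ z : ℂ, g z = ∑' n : ℕ, (c n : ℂ) * a n * z ^ n) :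
    (∀ z : ℂ, ‖z‖ ≤ 1 → Summable (fun n : ℕ => ‖(c n : ℂ) * a n * z ^ n‖)) ∧
    DifferentiableOn ℂ g (ball (0 : ℂ) 1) ∧
    ∃ M : ℝ, ∀ z ∈ ball (0 : ℂ) 1, ‖g z‖ ≤ M := by
  have hμ1 : (0 : ℝ) < μ + 1 := by linarith
  have hs0 : 0 < 1 / (μ + 1) := by positivity
  have hA : 0 < Real.Gamma (1 / (μ + 1) + α + 1) := Real.Gamma_pos_of_pos (by linarith)
  have hBg : 0 < Real.Gamma (1 / (μ + 1) + 1) := Real.Gamma_pos_of_pos (by linarith)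
  set K : ℝ := Real.Gamma (1 / (μ + 1) + α + 1) / Real.Gamma (1 / (μ + 1) + 1) with hK
  have hK0 : 0 < K := div_pos hA hBg
  set D : ℝ := max 4 (8 * K * (μ + 1)) with hD
  have hD0 : 0 < D := lt_of_lt_of_le (by norm_num) (le_max_left _ _)
  -- key coefficient bound
  have hbound : ∀ n : ℕ, ‖(c n : ℂ) * a n‖ ≤ D / ((n : ℝ) + 1) ^ 2 := by
    intro n
    rcases (show n = 0 ∨ n = 1 ∨ 2 ≤ n by omega) with rfl | rfl | hn
    · simp only [ha0, mul_zero, norm_zero]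
      positivity
    · have hc1 : c 1 = 1 := by
        rw [hc 1]
        simp only [Nat.cast_one]
        exact div_self (mul_pos hA hBg).ne'
      rw [hc1, ha1]
      simp only [Complex.ofReal_one, one_mul, norm_one]
      have h4 : (4 : ℝ) ≤ D := le_max_left _ _
      push_cast
      rw [le_div_iff₀ (by norm_num)]
      linarith
    · have hn0 : 0 < (n : ℝ) := by
        have : 0 < n := by omega
        exact_mod_cast this
      set t : ℝ := (n : ℝ) / (μ + 1) with ht
      have ht0 : 0 < t := by positivity
      have hmono : Real.Gamma (t + 2) ≤ Real.Gamma (t + α + 1) := by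
        apply Real.Gamma_strictMonoOn_Ici.monotoneOn
        · simp only [Set.mem_Ici]; linarith
        · simp only [Set.mem_Ici]; linarith
        · linarith
      have hG2 : Real.Gamma (t + 2) = (t + 1) * Real.Gamma (t + 1) := by
        have h : t + 2 = (t + 1) + 1 := by ring
        rw [h, Real.Gamma_add_one (by linarith)]
      have hGt1 : 0 < Real.Gamma (t + 1) := Real.Gamma_pos_of_pos (by linarith)
      have hGta : 0 < Real.Gamma (t + α + 1) := Real.Gamma_pos_of_pos (by linarith)
      have hratio : Real.Gamma (t + 1) / Real.Gamma (t + α + 1) ≤ 1 / (t + 1) := by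
        rw [div_le_div_iff₀ hGta (by linarith)]
        calc Real.Gamma (t + 1) * (t + 1) = Real.Gamma (t + 2) := by rw [hG2]; ring
          _ ≤ Real.Gamma (t + α + 1) := hmono
          _ = 1 * Real.Gamma (t + α + 1) := by ring
      have hcn' : c n = K * (Real.Gamma (t + 1) / Real.Gamma (t + α + 1)) := by
        rw [hc n, ← ht, hK]
        ring
      have hcn : c n ≤ K * ((μ + 1) / n) := by
        rw [hcn']
        have h1t : 1 / (t + 1) ≤ (μ + 1) / n := by
          rw [div_le_div_iff₀ (by linarith) hn0]
          have htn : t * (μ + 1) = (n : ℝ) := by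
            rw [ht]; field_simp
          nlinarith
        calc K * (Real.Gamma (t + 1) / Real.Gamma (t + α + 1)) ≤ K * (1 / (t + 1)) :=
              mul_le_mul_of_nonneg_left hratio hK0.le
          _ ≤ K * ((μ + 1) / n) := mul_le_mul_of_nonneg_left h1t hK0.le
      have hcn0 : 0 < c n := by
        rw [hcn']
        exact mul_pos hK0 (div_pos hGt1 hGta)
      have han := ha n hn
      calc ‖(c n : ℂ) * a n‖ = |c n| * ‖a n‖ := by
            rw [norm_mul, Complex.norm_real, Real.norm_eq_abs]
        _ ≤ (K * ((μ + 1) / n)) * (2 / n) := by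
            apply mul_le_mul _ han (norm_nonneg _) (by positivity)
            rw [abs_of_pos hcn0]; exact hcn
        _ = 2 * K * (μ + 1) / (n : ℝ) ^ 2 := by field_simp
        _ ≤ D / ((n : ℝ) + 1) ^ 2 := by
            rw [div_le_div_iff₀ (by positivity) (by positivity)]
            have hn2 : (2 : ℝ) ≤ (n : ℝ) := by exact_mod_cast hn
            have h1 : ((n : ℝ) + 1) ^ 2 ≤ 4 * (n : ℝ) ^ 2 := by nlinarith
            have h2 : 8 * K * (μ + 1) ≤ D := le_max_right _ _
            calc 2 * K * (μ + 1) * ((n : ℝ) + 1) ^ 2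
                ≤ 2 * K * (μ + 1) * (4 * (n : ℝ) ^ 2) :=
                  mul_le_mul_of_nonneg_left h1 (by positivity)
              _ = (8 * K * (μ + 1)) * (n : ℝ) ^ 2 := by ring
              _ ≤ D * (n : ℝ) ^ 2 := mul_le_mul_of_nonneg_right h2 (by positivity)
  set B : ℕ → ℝ := fun n => D / ((n : ℝ) + 1) ^ 2 with hB
  have hB0 : ∀ n, 0 ≤ B n := fun n => by positivity
  have hBsum : Summable B := by
    have h1 : Summable (fun n : ℕ => 1 / ((n : ℝ) + 1) ^ 2) := by
      have := (summable_nat_add_iff (f := fun n : ℕ => 1 / (n : ℝ) ^ 2) 1).2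
        (Real.summable_one_div_nat_pow.2 one_lt_two)
      exact this.congr (fun n => by simp)
    have := h1.mul_left D
    exact this.congr (fun n => by simp only [hB]; ring)
  have hsum1 : ∀ z : ℂ, ‖z‖ ≤ 1 → Summable (fun n : ℕ => ‖(c n : ℂ) * a n * z ^ n‖) := by
    intro z hz
    apply Summable.of_nonneg_of_le (fun n => norm_nonneg _) _ hBsum
    intro n
    rw [norm_mul]
    calc ‖(c n : ℂ) * a n‖ * ‖z ^ n‖ ≤ B n * 1 := by
          apply mul_le_mul (hbound n) _ (norm_nonneg _) (hB0 n)
          rw [norm_pow]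
          exact pow_le_one₀ (norm_nonneg z) hz
      _ = B n := mul_one _
  refine ⟨hsum1, ?_, ?_⟩
  · have hgeq : g = fun z => ∑' n : ℕ, (c n : ℂ) * a n * z ^ n := funext hg
    rw [hgeq]
    apply differentiableOn_tsum_of_summable_norm hBsum
      (fun n => (Differentiable.differentiableOn (by fun_prop))) isOpen_ball
    intro n w hw
    rw [mem_ball_zero_iff] at hw
    rw [norm_mul]
    calc ‖(c n : ℂ) * a n‖ * ‖w ^ n‖ ≤ B n * 1 := by
          apply mul_le_mul (hbound n) _ (norm_nonneg _) (hB0 n)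
          rw [norm_pow]
          exact pow_le_one₀ (norm_nonneg w) hw.le
      _ = B n := mul_one _
  · refine ⟨∑' n, B n, fun z hz => ?_⟩
    rw [mem_ball_zero_iff] at hz
    rw [hg z]
    have hsz := hsum1 z hz.le
    calc ‖∑' n : ℕ, (c n : ℂ) * a n * z ^ n‖ ≤ ∑' n : ℕ, ‖(c n : ℂ) * a n * z ^ n‖ :=
          norm_tsum_le_tsum_norm hsz
      _ ≤ ∑' n, B n := by
          apply Summable.tsum_le_tsum _ hsz hBsum
          intro n
          rw [norm_mul]
          calc ‖(c n : ℂ) * a n‖ * ‖z ^ n‖ ≤ B n * 1 := by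
                apply mul_le_mul (hbound n) _ (norm_nonneg _) (hB0 n)
                rw [norm_pow]
                exact pow_le_one₀ (norm_nonneg z) hz.le
            _ = B n := mul_one _
end

section
/- Let α > 1 and μ > −1 and let f be a normalized analytic function on 𝔻 (f(0)=0, f'(0)=1). Suppose |(Ω^{α−1,μ} f(z) − Ω^{α,μ} f(z))/z| < 1/(1+α(μ+1)) for all z ∈ 𝔻 \ {0} (with the quotient extended analytically at 0). Then Re(Ω^{α,μ} f(z)/z) > 0 for all z ∈ 𝔻. -/
open Complex Metric

private lemma gamma_superadd {x y : ℝ} (hx : 1 ≤ x) (hy : 1 ≤ y) :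
    Real.Gamma x * Real.Gamma y ≤ Real.Gamma (x + y - 1) := by
  rcases eq_or_lt_of_le hx with rfl | h1
  · simp [Real.Gamma_one]
  rcases eq_or_lt_of_le hy with rfl | h2
  · simp [Real.Gamma_one]
  have hs : (0:ℝ) < x + y - 2 := by linarith
  have hcpos : (0:ℝ) < x + y - 1 := by linarith
  have ha' : (0:ℝ) ≤ (y - 1) / (x + y - 2) := div_nonneg (by linarith) hs.le
  have hb' : (0:ℝ) ≤ (x - 1) / (x + y - 2) := div_nonneg (by linarith) hs.le
  have hab : (y - 1) / (x + y - 2) + (x - 1) / (x + y - 2) = 1 := by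
    field_simp; ring
  have hab' : (x - 1) / (x + y - 2) + (y - 1) / (x + y - 2) = 1 := by
    field_simp; ring
  have H1 := Real.convexOn_log_Gamma.2 (Set.mem_Ioi.2 one_pos) (Set.mem_Ioi.2 hcpos) ha' hb' hab
  have H2 := Real.convexOn_log_Gamma.2 (Set.mem_Ioi.2 one_pos) (Set.mem_Ioi.2 hcpos) hb' ha' hab'
  simp only [smul_eq_mul, Function.comp_apply, Real.Gamma_one, Real.log_one, mul_zero, zero_add,
    mul_one] at H1 H2
  have e1 : (y - 1) / (x + y - 2) + (x - 1) / (x + y - 2) * (x + y - 1) = x := by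
    field_simp; ring
  have e2 : (x - 1) / (x + y - 2) + (y - 1) / (x + y - 2) * (x + y - 1) = y := by
    field_simp; ring
  rw [e1] at H1
  rw [e2] at H2
  have hgx : 0 < Real.Gamma x := Real.Gamma_pos_of_pos (by linarith)
  have hgy : 0 < Real.Gamma y := Real.Gamma_pos_of_pos (by linarith)
  have hgc : 0 < Real.Gamma (x + y - 1) := Real.Gamma_pos_of_pos hcpos
  have hlog : Real.log (Real.Gamma x * Real.Gamma y) ≤ Real.log (Real.Gamma (x + y - 1)) := by
    rw [Real.log_mul hgx.ne' hgy.ne']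
    have : (x - 1) / (x + y - 2) * Real.log (Real.Gamma (x + y - 1)) +
        (y - 1) / (x + y - 2) * Real.log (Real.Gamma (x + y - 1)) =
        Real.log (Real.Gamma (x + y - 1)) := by
      rw [← add_mul, hab', one_mul]
    linarith
  calc Real.Gamma x * Real.Gamma y
      = Real.exp (Real.log (Real.Gamma x * Real.Gamma y)) :=
        (Real.exp_log (by positivity)).symm
    _ ≤ Real.exp (Real.log (Real.Gamma (x + y - 1))) := Real.exp_le_exp.2 hlog
    _ = Real.Gamma (x + y - 1) := Real.exp_log hgc

private lemma summable_weight {g : ℕ → ℝ}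
    (hsum : ∀ s : ℝ, 0 ≤ s → s < 1 → Summable fun n : ℕ => g n * s ^ n)
    (hg : ∀ n, 0 ≤ g n) (k : ℕ) {r : ℝ} (hr0 : 0 ≤ r) (hr1 : r < 1) :
    Summable fun n : ℕ => (n : ℝ) ^ k * (g n * r ^ n) := by
  obtain ⟨s, hrs, hs1, hs0⟩ : ∃ s, r < s ∧ s < 1 ∧ 0 < s :=
    ⟨(r + 1) / 2, by linarith, by linarith, by linarith⟩
  have hS := hsum s hs0.le hs1
  have hB : ∀ n, g n * s ^ n ≤ ∑' m, g m * s ^ m :=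
    fun n => Summable.le_tsum hS n fun m _ => mul_nonneg (hg m) (by positivity)
  set B := ∑' m : ℕ, g m * s ^ m with hB_def
  have hrs1 : ‖r / s‖ < 1 := by
    rw [Real.norm_eq_abs, _root_.abs_of_nonneg (div_nonneg hr0 hs0.le)]
    exact (div_lt_one hs0).2 hrs
  have hgeo : Summable fun n : ℕ => B * ((n : ℝ) ^ k * (r / s) ^ n) :=
    (summable_pow_mul_geometric_of_norm_lt_one k hrs1).mul_left B
  refine hgeo.of_nonneg_of_le
    (fun n => mul_nonneg (by positivity) (mul_nonneg (hg n) (by positivity))) fun n => ?_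
  have he : g n * r ^ n = g n * s ^ n * (r / s) ^ n := by
    rw [div_pow]; field_simp
  rw [he]
  calc (n:ℝ) ^ k * (g n * s ^ n * (r / s) ^ n)
      ≤ (n:ℝ) ^ k * (B * (r / s) ^ n) := by
        apply mul_le_mul_of_nonneg_left _ (by positivity)
        exact mul_le_mul_of_nonneg_right (hB n) (by positivity)
    _ = B * ((n:ℝ) ^ k * (r / s) ^ n) := by ring

private lemma summable_shift {g : ℕ → ℝ}
    (hsum : ∀ s : ℝ, 0 ≤ s → s < 1 → Summable fun n : ℕ => g n * s ^ n)
    (hg : ∀ n, 0 ≤ g n) {r : ℝ} (hr0 : 0 ≤ r) (hr1 : r < 1) :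
    Summable fun n : ℕ => g (n + 1) * r ^ n := by
  obtain ⟨s, hrs, hs1, hs0⟩ : ∃ s, r < s ∧ s < 1 ∧ 0 < s :=
    ⟨(r + 1) / 2, by linarith, by linarith, by linarith⟩
  have hS := hsum s hs0.le hs1
  have hB : ∀ n, g n * s ^ n ≤ ∑' m, g m * s ^ m :=
    fun n => Summable.le_tsum hS n fun m _ => mul_nonneg (hg m) (by positivity)
  set B := ∑' m : ℕ, g m * s ^ m with hB_def
  have hrs1 : ‖r / s‖ < 1 := by
    rw [Real.norm_eq_abs, _root_.abs_of_nonneg (div_nonneg hr0 hs0.le)]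
    exact (div_lt_one hs0).2 hrs
  have hgeo : Summable fun n : ℕ => (B / s) * (r / s) ^ n :=
    (summable_geometric_of_norm_lt_one hrs1).mul_left _
  refine hgeo.of_nonneg_of_le
    (fun n => mul_nonneg (hg _) (by positivity)) fun n => ?_
  have hsn : (0:ℝ) < s ^ (n + 1) := by positivity
  have h1 : g (n + 1) ≤ B / s ^ (n + 1) := by
    rw [le_div_iff₀ hsn]; exact hB (n + 1)
  calc g (n + 1) * r ^ n ≤ B / s ^ (n + 1) * r ^ n :=
        mul_le_mul_of_nonneg_right h1 (by positivity)
    _ = B / s * (r / s) ^ n := by rw [div_pow, pow_succ]; ring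

private lemma hasDerivAt_tsum_pow (b : ℕ → ℂ)
    (hb : ∀ r : ℝ, 0 ≤ r → r < 1 → Summable fun n : ℕ => ‖b n‖ * r ^ n)
    {z : ℂ} (hz : ‖z‖ < 1) :
    HasDerivAt (fun w : ℂ => ∑' n : ℕ, b n * w ^ n)
      (∑' n : ℕ, b n * (n * z ^ (n - 1))) z := by
  obtain ⟨r, hzr, hr1, hr0⟩ : ∃ r, ‖z‖ < r ∧ r < 1 ∧ 0 < r :=
    ⟨(‖z‖ + 1) / 2, by linarith, by linarith, by positivity⟩
  have hzball : z ∈ ball (0:ℂ) r := by rwa [mem_ball_zero_iff]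
  have hsum1 : Summable fun n : ℕ => (n : ℝ) ^ 1 * (‖b n‖ * r ^ n) :=
    summable_weight hb (fun n => norm_nonneg _) 1 hr0.le hr1
  have hu : Summable fun n : ℕ => (1 / r) * ((n : ℝ) ^ 1 * (‖b n‖ * r ^ n)) :=
    hsum1.mul_left _
  refine hasDerivAt_of_tendstoUniformlyOn (l := Filter.atTop) (g := fun w : ℂ => ∑' n : ℕ, b n * w ^ n)
    (g' := fun w : ℂ => ∑' n : ℕ, b n * (n * w ^ (n - 1)))
    (f := fun N x => ∑ n ∈ Finset.range N, b n * x ^ n)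
    (f' := fun N x => ∑ n ∈ Finset.range N, b n * (n * x ^ (n - 1)))
    isOpen_ball ?_ ?_ ?_ hzball
  · refine tendstoUniformlyOn_tsum_nat hu fun n x hx => ?_
    have hxr : ‖x‖ ≤ r := le_of_lt (mem_ball_zero_iff.1 hx)
    match n with
    | 0 => simp
    | (m+1) =>
      rw [norm_mul, norm_mul, norm_pow, Complex.norm_natCast]
      have h1 : ‖x‖ ^ (m + 1 - 1) ≤ r ^ m := by
        simpa using pow_le_pow_left₀ (norm_nonneg x) hxr m
      have h2 : ‖b (m+1)‖ * ((m+1 : ℕ) * ‖x‖ ^ (m + 1 - 1)) ≤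
          ‖b (m+1)‖ * ((m+1 : ℕ) * r ^ m) := by
        apply mul_le_mul_of_nonneg_left _ (norm_nonneg _)
        exact mul_le_mul_of_nonneg_left h1 (by positivity)
      refine h2.trans (le_of_eq ?_)
      push_cast
      field_simp
      ring
  · filter_upwards with N x hx
    exact HasDerivAt.fun_sum fun n _ => (hasDerivAt_pow n x).const_mul (b n)
  · intro x hx
    have hxr : ‖x‖ < 1 := lt_trans (mem_ball_zero_iff.1 hx) hr1
    have hsx : Summable fun n : ℕ => b n * x ^ n := by
      refine Summable.of_norm ((hb ‖x‖ (norm_nonneg x) hxr).congr fun n => ?_)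
      rw [norm_mul, norm_pow]
    exact hsx.hasSum.tendsto_sum_nat
theorem omega_quotient_positive_re (α μ : ℝ) (hα : 1 < α) (hμ : -1 < μ)
    (a : ℕ → ℂ) (ha0 : a 0 = 0) (ha1 : a 1 = 1)
    (hconv : ∀ z ∈ ball (0 : ℂ) 1, Summable (fun n : ℕ => a n * z ^ n))
    (c : ℝ → ℕ → ℝ)
    (hc : ∀ (β : ℝ) (n : ℕ), c β n =
      (Real.Gamma (1 / (μ + 1) + β + 1) * Real.Gamma ((n : ℝ) / (μ + 1) + 1)) /
        (Real.Gamma ((n : ℝ) / (μ + 1) + β + 1) * Real.Gamma (1 / (μ + 1) + 1)))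
    (Om : ℝ → ℂ → ℂ)
    (hOm : ∀ (β : ℝ) (z : ℂ), Om β z = ∑' n : ℕ, (c β n : ℂ) * a n * z ^ n)
    (hineq : ∀ z ∈ ball (0 : ℂ) 1, z ≠ 0 →
      ‖(Om (α - 1) z - Om α z) / z‖ < 1 / (1 + α * (μ + 1))) :
    ∀ z ∈ ball (0 : ℂ) 1, z ≠ 0 → 0 < (Om α z / z).re := by
  have hA : (0:ℝ) < μ + 1 := by linarith
  set A := μ + 1 with hA_def
  have hαpos : (0:ℝ) < α := by linarith
  have hα1pos : (0:ℝ) < α - 1 := by linarith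
  have hαA : (0:ℝ) < α * A := mul_pos hαpos hA
  have hK0 : (0:ℝ) < 1 + α * A := by linarith
  set K := 1 + α * A with hK_def
  have hKne : K ≠ 0 := hK0.ne'
  have hAne : A ≠ 0 := hA.ne'
  have h1A : (0:ℝ) < 1 / A := by positivity
  have hΓ : ∀ x : ℝ, 0 < x → 0 < Real.Gamma x := fun x hx => Real.Gamma_pos_of_pos hx
  have hc_pos : ∀ (β : ℝ) (n : ℕ), 0 < β → 0 < c β n := by
    intro β n hβ
    have h0 : (0:ℝ) ≤ (n:ℝ)/A := div_nonneg (Nat.cast_nonneg n) hA.le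
    rw [hc]
    exact div_pos (mul_pos (hΓ _ (by linarith)) (hΓ _ (by linarith)))
      (mul_pos (hΓ _ (by linarith)) (hΓ _ (by linarith)))
  have hc1 : c α 1 = 1 := by
    rw [hc]
    push_cast
    exact div_self (mul_pos (hΓ _ (by linarith)) (hΓ _ (by linarith))).ne'
  have hrec : ∀ m : ℕ, K * c (α - 1) m = ((m:ℝ) + α * A) * c α m := by
    intro m
    have hm0 : (0:ℝ) ≤ (m:ℝ)/A := div_nonneg (Nat.cast_nonneg m) hA.le
    have hx1 : (0:ℝ) < 1/A + α := by linarith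
    have hx2 : (0:ℝ) < (m:ℝ)/A + α := by linarith
    have hg1 := (hΓ _ hx1).ne'
    have hg2 := (hΓ _ hx2).ne'
    have hg3 := (hΓ ((m:ℝ)/A + 1) (by linarith)).ne'
    have hg4 := (hΓ (1/A + 1) (by linarith)).ne'
    rw [hc, hc]
    have e1 : 1/A + (α-1) + 1 = 1/A + α := by ring
    have e2 : (m:ℝ)/A + (α-1) + 1 = (m:ℝ)/A + α := by ring
    have e3 : 1/A + α + 1 = (1/A + α) + 1 := by ring
    have e4 : (m:ℝ)/A + α + 1 = ((m:ℝ)/A + α) + 1 := by ring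
    rw [e1, e2, e3, e4, Real.Gamma_add_one hx1.ne', Real.Gamma_add_one hx2.ne']
    rw [hK_def]
    field_simp
  have hcoeff : ∀ n : ℕ, K * (c (α-1) (n+1) - c α (n+1)) = (n:ℝ) * c α (n+1) := by
    intro n
    have h := hrec (n+1)
    push_cast at h
    rw [hK_def] at h ⊢
    linear_combination h
  have hceq : ∀ m : ℕ, c (α-1) m = ((m:ℝ) + α * A) / K * c α m := by
    intro m
    field_simp
    linarith [hrec m]
  set C := Real.Gamma (1/A + α + 1) / (Real.Gamma (α + 1) * Real.Gamma (1/A + 1)) with hC_def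
  have hC0 : 0 < C :=
    div_pos (hΓ _ (by linarith)) (mul_pos (hΓ _ (by linarith)) (hΓ _ (by linarith)))
  have hcb : ∀ n : ℕ, c α n ≤ C := by
    intro n
    have hn0 : (0:ℝ) ≤ (n:ℝ)/A := div_nonneg (Nat.cast_nonneg n) hA.le
    have hsup := gamma_superadd (x := (n:ℝ)/A + 1) (y := α + 1) (by linarith) (by linarith)
    have e : (n:ℝ)/A + 1 + (α + 1) - 1 = (n:ℝ)/A + α + 1 := by ring
    rw [e] at hsup
    have hg1 := hΓ (1/A + α + 1) (by linarith)
    have hg4 := hΓ (1/A + 1) (by linarith)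
    rw [hc, hC_def, div_le_div_iff₀ (mul_pos (hΓ _ (by linarith)) (hΓ _ (by linarith)))
        (mul_pos (hΓ _ (by linarith)) (hΓ _ (by linarith)))]
    nlinarith [mul_le_mul_of_nonneg_left hsup (mul_pos hg1 hg4).le]
  have ha_sum : ∀ r : ℝ, 0 ≤ r → r < 1 → Summable fun n : ℕ => ‖a n‖ * r ^ n := by
    intro r h0 h1
    have hball : ((r:ℂ)) ∈ ball (0:ℂ) 1 := by
      rw [mem_ball_zero_iff, Complex.norm_real, Real.norm_eq_abs, _root_.abs_of_nonneg h0]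
      exact h1
    have h2 : Summable fun n : ℕ => ‖a n * (r:ℂ) ^ n‖ := summable_norm_iff.mpr (hconv _ hball)
    refine h2.congr fun n => ?_
    rw [norm_mul, norm_pow, Complex.norm_real, Real.norm_eq_abs, _root_.abs_of_nonneg h0]
  set bc : ℕ → ℂ := fun n => ((c α (n+1) : ℝ) : ℂ) * a (n+1) with hbc_def
  set bc' : ℕ → ℂ := fun n => ((c (α-1) (n+1) : ℝ) : ℂ) * a (n+1) with hbc'_def
  set ec : ℕ → ℂ := fun n => (n : ℂ) * bc n with hec_def
  have hbc_sum : ∀ r : ℝ, 0 ≤ r → r < 1 → Summable fun n : ℕ => ‖bc n‖ * r ^ n := by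
    intro r h0 h1
    have hsh : Summable fun n : ℕ => ‖a (n+1)‖ * r ^ n :=
      summable_shift ha_sum (fun n => norm_nonneg _) h0 h1
    refine (hsh.mul_left C).of_nonneg_of_le (fun n => by positivity) fun n => ?_
    have h2 : ‖bc n‖ = c α (n+1) * ‖a (n+1)‖ := by
      simp only [hbc_def]
      rw [norm_mul, Complex.norm_real, Real.norm_eq_abs,
        _root_.abs_of_nonneg (hc_pos α (n+1) hαpos).le]
    rw [h2]
    calc c α (n+1) * ‖a (n+1)‖ * r ^ n ≤ C * ‖a (n+1)‖ * r ^ n := by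
          apply mul_le_mul_of_nonneg_right _ (by positivity)
          exact mul_le_mul_of_nonneg_right (hcb (n+1)) (norm_nonneg _)
      _ = C * (‖a (n+1)‖ * r ^ n) := by ring
  have hec_sum : ∀ r : ℝ, 0 ≤ r → r < 1 → Summable fun n : ℕ => ‖ec n‖ * r ^ n := by
    intro r h0 h1
    refine (summable_weight hbc_sum (fun n => norm_nonneg _) 1 h0 h1).congr fun n => ?_
    simp only [hec_def, hbc_def, norm_mul, Complex.norm_natCast, Complex.norm_real,
      Real.norm_eq_abs]
    ring
  have hbc_sumz : ∀ w : ℂ, ‖w‖ < 1 → Summable fun n : ℕ => bc n * w ^ n := by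
    intro w hw
    refine Summable.of_norm (((hbc_sum ‖w‖ (norm_nonneg w) hw)).congr fun n => ?_)
    simp [norm_mul, norm_pow]
  have hbc'_sumz : ∀ w : ℂ, ‖w‖ < 1 → Summable fun n : ℕ => bc' n * w ^ n := by
    intro w hw
    have ht : (0:ℝ) ≤ ‖w‖ := norm_nonneg w
    have ha1_sum : ∀ s : ℝ, 0 ≤ s → s < 1 → Summable fun n : ℕ => ‖a (n+1)‖ * s ^ n :=
      fun s h0 h1 => summable_shift ha_sum (fun n => norm_nonneg _) h0 h1
    have S1 : Summable fun n : ℕ => (n:ℝ)^1 * (‖a (n+1)‖ * ‖w‖ ^ n) :=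
      summable_weight ha1_sum (fun n => norm_nonneg _) 1 ht hw
    have S0 : Summable fun n : ℕ => ‖a (n+1)‖ * ‖w‖ ^ n := ha1_sum ‖w‖ ht hw
    have Smaj : Summable fun n : ℕ =>
        (C/K) * ((n:ℝ)^1 * (‖a (n+1)‖ * ‖w‖^n) + (1 + α*A) * (‖a (n+1)‖ * ‖w‖^n)) :=
      (S1.add (S0.mul_left _)).mul_left _
    refine Summable.of_norm (Smaj.of_nonneg_of_le (fun n => norm_nonneg _) fun n => ?_)
    have hxn : (0:ℝ) ≤ ‖a (n+1)‖ * ‖w‖ ^ n := mul_nonneg (norm_nonneg _) (pow_nonneg ht n)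
    have h1 : c (α-1) (n+1) ≤ ((n:ℝ) + 1 + α*A)/K * C := by
      have h3 := hceq (n+1)
      push_cast at h3
      rw [show ((n:ℝ) + 1 + α*A) = ((n:ℝ) + 1) + α*A from by ring] at *
      rw [h3]
      exact mul_le_mul_of_nonneg_left (hcb (n+1))
        (div_nonneg (add_nonneg (by positivity) hαA.le) hK0.le)
    rw [norm_mul, norm_pow]
    have h2 : ‖bc' n‖ = c (α-1) (n+1) * ‖a (n+1)‖ := by
      simp only [hbc'_def]
      rw [norm_mul, Complex.norm_real, Real.norm_eq_abs,
        _root_.abs_of_nonneg (hc_pos (α-1) (n+1) hα1pos).le]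
    rw [h2]
    calc c (α-1) (n+1) * ‖a (n+1)‖ * ‖w‖ ^ n
        = c (α-1) (n+1) * (‖a (n+1)‖ * ‖w‖ ^ n) := by ring
      _ ≤ ((n:ℝ) + 1 + α*A)/K * C * (‖a (n+1)‖ * ‖w‖ ^ n) :=
          mul_le_mul_of_nonneg_right h1 hxn
      _ = (C/K) * ((n:ℝ)^1 * (‖a (n+1)‖ * ‖w‖^n) + (1 + α*A) * (‖a (n+1)‖ * ‖w‖^n)) := by
          field_simp
          ring
  set P : ℂ → ℂ := fun w => ∑' n : ℕ, bc n * w ^ n with hP_def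
  set Pm : ℂ → ℂ := fun w => ∑' n : ℕ, bc' n * w ^ n with hPm_def
  set Hf : ℂ → ℂ := fun w => ∑' n : ℕ, ec n * w ^ n with hHf_def
  have hOmP : ∀ w : ℂ, ‖w‖ < 1 → Om α w = w * P w := by
    intro w hw
    have hS : Summable fun n : ℕ => ((c α n : ℝ) : ℂ) * a n * w ^ n := by
      refine Summable.of_norm ?_
      refine ((ha_sum ‖w‖ (norm_nonneg w) hw).mul_left C).of_nonneg_of_le
        (fun n => norm_nonneg _) fun n => ?_
      rw [norm_mul, norm_mul, norm_pow, Complex.norm_real, Real.norm_eq_abs,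
        _root_.abs_of_nonneg (hc_pos α n hαpos).le]
      calc c α n * ‖a n‖ * ‖w‖ ^ n ≤ C * ‖a n‖ * ‖w‖ ^ n := by
            apply mul_le_mul_of_nonneg_right _ (pow_nonneg (norm_nonneg w) n)
            exact mul_le_mul_of_nonneg_right (hcb n) (norm_nonneg _)
        _ = C * (‖a n‖ * ‖w‖ ^ n) := by ring
    rw [hOm α w, Summable.tsum_eq_zero_add hS, ha0]
    simp only [mul_zero, zero_mul, zero_add]
    rw [show (∑' n : ℕ, ((c α (n+1) : ℝ):ℂ) * a (n+1) * w ^ (n+1))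
        = ∑' n : ℕ, w * (bc n * w ^ n) from tsum_congr fun n => by
          simp only [hbc_def]; ring]
    rw [tsum_mul_left]
  have hOmPm : ∀ w : ℂ, ‖w‖ < 1 → Om (α-1) w = w * Pm w := by
    intro w hw
    have ht : (0:ℝ) ≤ ‖w‖ := norm_nonneg w
    have hS : Summable fun n : ℕ => ((c (α-1) n : ℝ) : ℂ) * a n * w ^ n := by
      have S1 : Summable fun n : ℕ => (n:ℝ)^1 * (‖a n‖ * ‖w‖ ^ n) :=
        summable_weight ha_sum (fun n => norm_nonneg _) 1 ht hw
      have S0 : Summable fun n : ℕ => ‖a n‖ * ‖w‖ ^ n := ha_sum ‖w‖ ht hw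
      have Smaj : Summable fun n : ℕ =>
          (C/K) * ((n:ℝ)^1 * (‖a n‖ * ‖w‖^n) + (α*A) * (‖a n‖ * ‖w‖^n)) :=
        (S1.add (S0.mul_left _)).mul_left _
      refine Summable.of_norm (Smaj.of_nonneg_of_le (fun n => norm_nonneg _) fun n => ?_)
      have hxn : (0:ℝ) ≤ ‖a n‖ * ‖w‖ ^ n := mul_nonneg (norm_nonneg _) (pow_nonneg ht n)
      have h1 : c (α-1) n ≤ ((n:ℝ) + α*A)/K * C := by
        rw [hceq n]
        exact mul_le_mul_of_nonneg_left (hcb n)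
          (div_nonneg (add_nonneg (Nat.cast_nonneg n) hαA.le) hK0.le)
      rw [norm_mul, norm_mul, norm_pow, Complex.norm_real, Real.norm_eq_abs,
        _root_.abs_of_nonneg (hc_pos (α-1) n hα1pos).le]
      calc c (α-1) n * ‖a n‖ * ‖w‖ ^ n = c (α-1) n * (‖a n‖ * ‖w‖ ^ n) := by ring
        _ ≤ ((n:ℝ) + α*A)/K * C * (‖a n‖ * ‖w‖ ^ n) := mul_le_mul_of_nonneg_right h1 hxn
        _ = (C/K) * ((n:ℝ)^1 * (‖a n‖ * ‖w‖^n) + (α*A) * (‖a n‖ * ‖w‖^n)) := by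
            field_simp
    rw [hOm (α-1) w, Summable.tsum_eq_zero_add hS, ha0]
    simp only [mul_zero, zero_mul, zero_add]
    rw [show (∑' n : ℕ, ((c (α-1) (n+1) : ℝ):ℂ) * a (n+1) * w ^ (n+1))
        = ∑' n : ℕ, w * (bc' n * w ^ n) from tsum_congr fun n => by
          simp only [hbc'_def]; ring]
    rw [tsum_mul_left]
  have hHfK : ∀ w : ℂ, ‖w‖ < 1 → Hf w = (K:ℂ) * (Pm w - P w) := by
    intro w hw
    have SP := hbc_sumz w hw
    have SP' := hbc'_sumz w hw
    have hterm : ∀ n : ℕ, ec n * w ^ n = (K:ℂ) * (bc' n * w^n - bc n * w^n) := by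
      intro n
      have h := hcoeff n
      have hcast : ((K : ℝ) : ℂ) * (((c (α-1) (n+1):ℝ):ℂ) - ((c α (n+1):ℝ):ℂ))
          = ((n:ℕ):ℂ) * ((c α (n+1):ℝ):ℂ) := by
        exact_mod_cast congrArg (fun x : ℝ => (x : ℂ)) h
      simp only [hec_def, hbc_def, hbc'_def]
      linear_combination (-(a (n+1) * w ^ n)) * hcast
    calc Hf w = ∑' n : ℕ, ec n * w ^ n := rfl
      _ = ∑' n : ℕ, (K:ℂ) * (bc' n * w^n - bc n * w^n) := tsum_congr hterm
      _ = (K:ℂ) * ∑' n : ℕ, (bc' n * w^n - bc n * w^n) := tsum_mul_left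
      _ = (K:ℂ) * (Pm w - P w) := by rw [Summable.tsum_sub SP' SP]
  have hH0 : Hf 0 = 0 := by
    have h : ∀ n : ℕ, ec n * (0:ℂ)^n = 0 := by
      intro n
      match n with
      | 0 => simp [hec_def]
      | (m+1) => simp
    calc Hf 0 = ∑' n : ℕ, ec n * (0:ℂ)^n := rfl
      _ = ∑' _ : ℕ, (0:ℂ) := tsum_congr h
      _ = 0 := tsum_zero
  have hPmP : ∀ w : ℂ, ‖w‖ < 1 → w ≠ 0 → Pm w - P w = (Om (α-1) w - Om α w)/w := by
    intro w hw hne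
    rw [hOmP w hw, hOmPm w hw]
    field_simp
  have hmaps : Set.MapsTo Hf (ball (0:ℂ) 1) (ball (0:ℂ) 1) := by
    intro w hw
    rw [mem_ball_zero_iff] at hw ⊢
    rcases eq_or_ne w 0 with rfl | hne
    · rw [hH0]
      simpa using one_pos
    · rw [hHfK w hw, hPmP w hw hne, norm_mul, Complex.norm_real, Real.norm_eq_abs,
        _root_.abs_of_pos hK0]
      have h := hineq w (mem_ball_zero_iff.2 hw) hne
      calc K * ‖(Om (α-1) w - Om α w)/w‖ < K * (1/K) := mul_lt_mul_of_pos_left h hK0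
        _ = 1 := by field_simp
  have hHdiff : DifferentiableOn ℂ Hf (ball (0:ℂ) 1) := by
    intro w hw
    exact ((hasDerivAt_tsum_pow ec hec_sum
      (mem_ball_zero_iff.1 hw)).differentiableAt).differentiableWithinAt
  have hdsb : ∀ w ∈ ball (0:ℂ) 1, ‖dslope Hf 0 w‖ ≤ 1 := by
    intro w hw
    have h := Complex.norm_dslope_le_div_of_mapsTo_ball hHdiff (by rw [hH0]; exact hmaps.mono_right ball_subset_closedBall) hw
    simpa using h
  have hPderiv : ∀ w ∈ ball (0:ℂ) 1, HasDerivAt P (dslope Hf 0 w) w := by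
    intro w hw
    have hw1 := mem_ball_zero_iff.1 hw
    have hD : HasDerivAt P (∑' n : ℕ, bc n * (n * w ^ (n-1))) w :=
      hasDerivAt_tsum_pow bc hbc_sum hw1
    have key : (∑' n : ℕ, bc n * (n * w ^ (n-1))) = dslope Hf 0 w := by
      rcases eq_or_ne w 0 with rfl | hne
      · rw [dslope_same]
        have hDH : HasDerivAt Hf (∑' n : ℕ, ec n * (n * (0:ℂ)^(n-1))) 0 :=
          hasDerivAt_tsum_pow ec hec_sum (by simpa using one_pos)
        rw [hDH.deriv]
        rw [tsum_eq_single 1 ?_, tsum_eq_single 1 ?_]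
        · simp [hec_def]
        · intro n hn
          match n with
          | 0 => simp [hec_def]
          | 1 => exact absurd rfl hn
          | (m+2) => simp [pow_succ]
        · intro n hn
          match n with
          | 0 => simp
          | 1 => exact absurd rfl hn
          | (m+2) => simp [pow_succ]
      · rw [dslope_of_ne _ hne, slope_def_field, hH0, sub_zero, sub_zero]
        rw [eq_div_iff hne, ← tsum_mul_right]
        refine tsum_congr fun n => ?_
        match n with
        | 0 => simp [hec_def]
        | (m+1) =>
          simp only [hec_def, Nat.add_sub_cancel]
          push_cast
          ring
    rw [← key]
    exact hD
  intro z hzball hzne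
  have hz1 : ‖z‖ < 1 := mem_ball_zero_iff.1 hzball
  have hlip := Convex.norm_image_sub_le_of_norm_hasDerivWithin_le
    (fun x hx => (hPderiv x hx).hasDerivWithinAt) hdsb (convex_ball 0 1)
    (mem_ball_self one_pos) hzball
  have hP0 : P 0 = 1 := by
    have h : (∑' n : ℕ, bc n * (0:ℂ)^n) = bc 0 * (0:ℂ)^0 := by
      refine tsum_eq_single 0 fun n hn => ?_
      match n with
      | 0 => exact absurd rfl hn
      | (m+1) => simp
    calc P 0 = ∑' n : ℕ, bc n * (0:ℂ)^n := rfl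
      _ = bc 0 * (0:ℂ)^0 := h
      _ = 1 := by simp [hbc_def, hc1, ha1]
  have h1 : ‖P z - 1‖ ≤ ‖z‖ := by
    have := hlip
    rw [hP0] at this
    simpa using this
  have hre : 0 < (P z).re := by
    have h2 : |(P z - 1).re| ≤ ‖P z - 1‖ := by
      exact Complex.abs_re_le_norm _
    have h3 : (P z - 1).re = (P z).re - 1 := by
      simp [Complex.sub_re]
    have h4 := (abs_le.1 h2).1
    rw [h3] at h4
    linarith
  have hOmz : Om α z = z * P z := hOmP z hz1
  rw [hOmz, mul_div_cancel_left₀ _ hzne]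
  exact hre
end

section
/- Let p and g' be analytic on 𝔻 with p(0) = 1, Re(p(z)) > 0, g(0) = 0, g'(0) = 1, and Re(g'(z)) > 1/2 for all z ∈ 𝔻. Write p(z) = ∑_{n≥0} p_n z^n and g(z) = z + ∑_{n≥2} b_n z^n. Then the function u(z) = z + ∑_{n≥2} p_{n−1} b_n z^n satisfies Re(u'(z)) > 0 for all z ∈ 𝔻. -/
open Complex Metric MeasureTheory intervalIntegral

/-- Coefficients of a series summable at radius ρ are bounded by C/ρ^n. -/
lemma aux_coef_bound {c : ℕ → ℂ} {ρ : ℝ} (hρ : 0 < ρ)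
    (h : Summable fun n => c n * (ρ : ℂ) ^ n) :
    ∃ C : ℝ, 0 < C ∧ ∀ n, ‖c n‖ * ρ ^ n ≤ C := by
  have h0 := h.tendsto_atTop_zero.norm
  simp only [norm_zero] at h0
  obtain ⟨C, hC⟩ := h0.bddAbove_range
  refine ⟨max C 1, by positivity, fun n => ?_⟩
  have : ‖c n * (ρ : ℂ) ^ n‖ ≤ C := hC ⟨n, rfl⟩
  calc ‖c n‖ * ρ ^ n = ‖c n * (ρ : ℂ) ^ n‖ := by
        rw [norm_mul, norm_pow, Complex.norm_real, Real.norm_of_nonneg hρ.le]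
    _ ≤ C := this
    _ ≤ max C 1 := le_max_left _ _

/-- Orthogonality of exponentials on the circle. -/
lemma aux_circle (m : ℤ) :
    (∫ θ in (0:ℝ)..(2 * Real.pi), Complex.exp (m * θ * Complex.I)) =
      if m = 0 then (2 * Real.pi : ℂ) else 0 := by
  rcases eq_or_ne m 0 with hm | hm
  · simp [hm]
  · rw [if_neg hm]
    have hc : (m : ℂ) * Complex.I ≠ 0 := by
      simp [Complex.I_ne_zero, Int.cast_eq_zero, hm]
    have := integral_exp_mul_complex (a := 0) (b := 2 * Real.pi) hc
    simp only [mul_comm ((m : ℂ) * Complex.I) _] at this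
    rw [show (fun θ : ℝ => Complex.exp ((m : ℂ) * θ * Complex.I)) =
        fun θ : ℝ => Complex.exp ((θ : ℂ) * ((m : ℂ) * Complex.I)) from
      funext fun θ => by ring_nf, this]
    have h1 : Complex.exp ((2 * Real.pi : ℝ) * ((m : ℂ) * Complex.I)) = 1 := by
      rw [show ((2 * Real.pi : ℝ) : ℂ) * ((m : ℂ) * Complex.I) = m * (2 * Real.pi * Complex.I) by
        push_cast; ring]
      exact Complex.exp_int_mul_two_pi_mul_I m
    rw [h1]
    simp

/-- Swap integral and sum for a dominated series of continuous functions. -/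
lemma aux_swap {F : ℕ → ℝ → ℂ} {M : ℕ → ℝ} (hc : ∀ n, Continuous (F n))
    (hb : ∀ n, ∀ t ∈ Set.uIoc (0:ℝ) (2 * Real.pi), ‖F n t‖ ≤ M n) (hM : Summable M)
    {f : ℝ → ℂ} (hf : ∀ t, HasSum (fun n => F n t) (f t)) :
    HasSum (fun n => ∫ t in (0:ℝ)..(2 * Real.pi), F n t)
      (∫ t in (0:ℝ)..(2 * Real.pi), f t) := by
  apply intervalIntegral.hasSum_integral_of_dominated_convergence (bound := fun n _ => M n)
  · exact fun n => (hc n).aestronglyMeasurable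
  · exact fun n => Filter.Eventually.of_forall fun t ht => hb n t ht
  · exact Filter.Eventually.of_forall fun t _ => hM
  · exact intervalIntegrable_const
  · exact Filter.Eventually.of_forall fun t _ => hf t

/-- Termwise differentiation of a power series converging on the unit ball. -/
lemma aux_deriv {c : ℕ → ℂ} {f : ℂ → ℂ}
    (hf : ∀ z ∈ ball (0:ℂ) 1, HasSum (fun n => c n * z ^ n) (f z))
    {z : ℂ} (hz : z ∈ ball (0:ℂ) 1) :
    HasSum (fun k : ℕ => ((k : ℂ) + 1) * c (k + 1) * z ^ k) (deriv f z) := by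
  rw [mem_ball_zero_iff] at hz
  set r : ℝ := ‖z‖ with hr
  have hr0 : 0 ≤ r := norm_nonneg z
  set t : ℝ := (r + 1) / 2 with ht
  have hrt : r < t := by simp only [ht]; linarith
  have ht1 : t < 1 := by simp only [ht]; linarith
  have ht0 : 0 < t := lt_of_le_of_lt hr0 hrt
  set ρ : ℝ := (t + 1) / 2 with hρ
  have htρ : t < ρ := by simp only [hρ]; linarith
  have hρ1 : ρ < 1 := by simp only [hρ]; linarith
  have hρ0 : 0 < ρ := lt_trans ht0 htρ
  have hsum : Summable fun n => c n * (ρ : ℂ) ^ n := by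
    refine (hf (ρ : ℂ) ?_).summable
    rw [mem_ball_zero_iff, Complex.norm_real, Real.norm_of_nonneg hρ0.le]; exact hρ1
  obtain ⟨C, hC0, hC⟩ := aux_coef_bound hρ0 hsum
  have hcn : ∀ n, ‖c n‖ ≤ C / ρ ^ n := fun n => by
    rw [le_div_iff₀ (by positivity)]; exact hC n
  set u : ℕ → ℝ := fun n => C / ρ * (ρ / t) * ((n : ℝ) * (t / ρ) ^ n) with hud
  have hu_sum : Summable u := by
    apply Summable.mul_left
    have h1 : ‖t / ρ‖ < 1 := by
      rw [Real.norm_of_nonneg (by positivity), div_lt_one hρ0]; exact htρ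
    simpa using summable_pow_mul_geometric_of_norm_lt_one 1 h1
  have hg' : ∀ (n : ℕ) (y : ℂ), y ∈ ball (0:ℂ) t → ‖(n : ℂ) * c n * y ^ (n - 1)‖ ≤ u n := by
    intro n y hy
    rw [mem_ball_zero_iff] at hy
    have h1 : ‖(n : ℂ) * c n * y ^ (n - 1)‖ = (n : ℝ) * ‖c n‖ * ‖y‖ ^ (n - 1) := by
      rw [norm_mul, norm_mul, norm_pow, Complex.norm_natCast]
    rw [h1]
    have h2 : (n : ℝ) * ‖c n‖ * ‖y‖ ^ (n - 1) ≤ (n : ℝ) * (C / ρ ^ n) * t ^ (n - 1) := by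
      apply mul_le_mul
      · exact mul_le_mul_of_nonneg_left (hcn n) (Nat.cast_nonneg n)
      · exact pow_le_pow_left₀ (norm_nonneg y) hy.le _
      · positivity
      · positivity
    refine h2.trans ?_
    have htne : t ≠ 0 := ne_of_gt ht0
    have hρne : ρ ≠ 0 := ne_of_gt hρ0
    match n with
    | 0 => simp [hud]
    | (m + 1) =>
      have he : C / ρ * (ρ / t) * (((m:ℝ) + 1) * (t / ρ) ^ (m + 1)) =
          ((m:ℝ) + 1) * (C / ρ ^ (m + 1)) * t ^ m := by
        rw [div_pow]; field_simp; ring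
      simp only [hud, Nat.add_sub_cancel, Nat.cast_add, Nat.cast_one]
      rw [he]
  have hzt : z ∈ ball (0:ℂ) t := mem_ball_zero_iff.mpr hrt
  have hz1 : z ∈ ball (0:ℂ) 1 := mem_ball_zero_iff.mpr hz
  have key := hasDerivAt_tsum_of_isPreconnected hu_sum (Metric.isOpen_ball)
    (convex_ball (0:ℂ) t).isPreconnected
    (g := fun (n : ℕ) (y : ℂ) => c n * y ^ n) (g' := fun (n : ℕ) (y : ℂ) => (n : ℂ) * c n * y ^ (n - 1))
    (fun n y _ => by simpa [mul_comm, mul_assoc, mul_left_comm] using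
      ((hasDerivAt_pow n y).const_mul (c n)))
    hg' hzt (hf z hz1).summable hzt
  have hderiv : deriv f z = ∑' n : ℕ, (n : ℂ) * c n * z ^ (n - 1) := by
    have heq : Set.EqOn f (fun w => ∑' n, c n * w ^ n) (ball (0:ℂ) 1) := fun w hw =>
      ((hf w hw).tsum_eq).symm
    have hev : f =ᶠ[nhds z] (fun w => ∑' n, c n * w ^ n) :=
      Filter.eventuallyEq_of_mem (Metric.isOpen_ball.mem_nhds hz1) heq
    rw [hev.deriv_eq, key.deriv]
  have hS : HasSum (fun n : ℕ => (n : ℂ) * c n * z ^ (n - 1)) (deriv f z) := by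
    rw [hderiv]
    exact (Summable.of_norm_bounded hu_sum fun n => hg' n z hzt).hasSum
  have hS1 : HasSum (fun k : ℕ => ((k + 1 : ℕ) : ℂ) * c (k + 1) * z ^ k) (deriv f z) := by
    refine (hasSum_nat_add_iff (f := fun n : ℕ => (n : ℂ) * c n * z ^ (n - 1)) 1).mpr ?_
    simpa using hS
  have hfin : (fun k : ℕ => ((k : ℂ) + 1) * c (k + 1) * z ^ k) =
      fun k : ℕ => ((k + 1 : ℕ) : ℂ) * c (k + 1) * z ^ k := funext fun k => by push_cast; ring
  rw [hfin]; exact hS1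

lemma aux_exp_norm (a : ℝ) : ‖Complex.exp ((a : ℂ) * Complex.I)‖ = 1 :=
  Complex.norm_exp_ofReal_mul_I a

lemma aux_fourier {q : ℕ → ℂ} {D : ℂ → ℂ}
    (hD : ∀ w ∈ ball (0:ℂ) 1, HasSum (fun j => q j * w ^ j) (D w))
    (hq0 : q 0 = 1) {s : ℝ} (hs0 : 0 < s) (hs1 : s < 1) (k : ℕ) :
    (∫ θ in (0:ℝ)..(2 * Real.pi), Complex.exp (-(k : ℂ) * θ * Complex.I) *
      ((2 * (D ((s : ℂ) * Complex.exp (θ * Complex.I))).re - 1 : ℝ) : ℂ))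
      = 2 * Real.pi * (q k * (s : ℂ) ^ k) := by
  set sE : ℝ → ℂ := fun θ => (s : ℂ) * Complex.exp ((θ : ℂ) * Complex.I) with hsE
  have hsEnorm : ∀ θ, ‖sE θ‖ = s := fun θ => by
    rw [hsE]; simp only [norm_mul, Complex.norm_real, Real.norm_of_nonneg hs0.le,
      aux_exp_norm, mul_one]
  have hsEball : ∀ θ, sE θ ∈ ball (0:ℂ) 1 := fun θ => by
    rw [mem_ball_zero_iff, hsEnorm]; exact hs1
  have hsEcont : Continuous sE := by continuity
  -- summable coefficient bound
  set ρ : ℝ := (s + 1) / 2 with hρ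
  have hsρ : s < ρ := by simp only [hρ]; linarith
  have hρ1 : ρ < 1 := by simp only [hρ]; linarith
  have hρ0 : 0 < ρ := lt_trans hs0 hsρ
  have hqsum : Summable fun j => q j * (ρ : ℂ) ^ j := by
    refine (hD (ρ : ℂ) ?_).summable
    rw [mem_ball_zero_iff, Complex.norm_real, Real.norm_of_nonneg hρ0.le]; exact hρ1
  obtain ⟨C, hC0, hC⟩ := aux_coef_bound hρ0 hqsum
  set Mq : ℕ → ℝ := fun j => C * (s / ρ) ^ j with hMq
  have hMq_sum : Summable Mq :=
    (summable_geometric_of_lt_one (by positivity) (by rw [div_lt_one hρ0]; exact hsρ)).mul_left C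
  have hMq_bd : ∀ j, ‖q j‖ * s ^ j ≤ Mq j := by
    intro j
    have h1 : ‖q j‖ * ρ ^ j * (s / ρ) ^ j ≤ C * (s / ρ) ^ j :=
      mul_le_mul_of_nonneg_right (hC j) (by positivity)
    have hps : ρ * (s / ρ) = s := by field_simp
    calc ‖q j‖ * s ^ j = ‖q j‖ * (ρ * (s / ρ)) ^ j := by rw [hps]
      _ = ‖q j‖ * ρ ^ j * (s / ρ) ^ j := by rw [mul_pow, mul_assoc]
      _ ≤ Mq j := h1
  -- continuity of θ ↦ D (sE θ)
  have hDD_cont : Continuous fun θ => D (sE θ) := by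
    have h1 : Continuous fun θ : ℝ => ∑' j, q j * (sE θ) ^ j := by
      apply continuous_tsum (u := Mq)
        (fun j => by exact ((continuous_const).mul (hsEcont.pow j))) hMq_sum
      intro j θ
      rw [norm_mul, norm_pow, hsEnorm]
      exact hMq_bd j
    have h2 : (fun θ => D (sE θ)) = fun θ : ℝ => ∑' j, q j * (sE θ) ^ j :=
      funext fun θ => ((hD (sE θ) (hsEball θ)).tsum_eq).symm
    rw [h2]; exact h1
  -- the exponential factor
  set e : ℝ → ℂ := fun θ => Complex.exp (-(k : ℂ) * θ * Complex.I) with he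
  have he_norm : ∀ θ : ℝ, ‖e θ‖ = 1 := by
    intro θ
    simp only [he]
    rw [show -(k : ℂ) * θ * Complex.I = ((-(k * θ) : ℝ) : ℂ) * Complex.I by
      push_cast; ring]
    exact aux_exp_norm _
  have he_cont : Continuous e := by
    apply Complex.continuous_exp.comp; continuity
  -- pointwise form of the A-family
  have hFj : ∀ (j : ℕ) (θ : ℝ), e θ * (q j * (sE θ) ^ j) =
      q j * (s : ℂ) ^ j * Complex.exp ((((j : ℤ) - (k : ℤ) : ℤ) : ℂ) * θ * Complex.I) := by
    intro j θ
    simp only [he, hsE]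
    rw [mul_pow, ← Complex.exp_nat_mul]
    rw [show ((((j : ℤ) - (k : ℤ) : ℤ) : ℂ) * θ * Complex.I) =
      (-(k : ℂ) * θ * Complex.I) + ((j : ℂ) * ((θ : ℂ) * Complex.I)) by push_cast; ring]
    rw [Complex.exp_add]; ring
  have hAint : ∀ j : ℕ, (∫ θ in (0:ℝ)..(2 * Real.pi), e θ * (q j * (sE θ) ^ j)) =
      if j = k then 2 * Real.pi * (q k * (s : ℂ) ^ k) else 0 := by
    intro j
    simp_rw [hFj j]
    rw [intervalIntegral.integral_const_mul, aux_circle]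
    rcases eq_or_ne j k with h | h
    · subst h; simp [mul_comm]
    · rw [if_neg (by omega), if_neg h, mul_zero]
  -- pointwise form of the B-family
  have hconj : ∀ (j : ℕ) (θ : ℝ), (starRingEnd ℂ) (q j * (sE θ) ^ j) =
      (starRingEnd ℂ) (q j) * (s : ℂ) ^ j * Complex.exp (-(j : ℂ) * θ * Complex.I) := by
    intro j θ
    simp only [hsE]
    rw [mul_pow, ← Complex.exp_nat_mul, map_mul, map_mul, map_pow, Complex.conj_ofReal,
      ← Complex.exp_conj]
    rw [show (starRingEnd ℂ) ((j : ℂ) * ((θ : ℂ) * Complex.I)) = -(j : ℂ) * θ * Complex.I by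
      rw [map_mul, map_mul, Complex.conj_I, Complex.conj_ofReal, map_natCast]; ring]
    ring
  have hGj : ∀ (j : ℕ) (θ : ℝ), e θ * (starRingEnd ℂ) (q j * (sE θ) ^ j) =
      (starRingEnd ℂ) (q j) * (s : ℂ) ^ j *
        Complex.exp (((-(k : ℤ) - (j : ℤ) : ℤ) : ℂ) * θ * Complex.I) := by
    intro j θ
    rw [hconj j θ]
    simp only [he]
    rw [show (((-(k : ℤ) - (j : ℤ) : ℤ) : ℂ) * θ * Complex.I) =
      (-(k : ℂ) * θ * Complex.I) + (-(j : ℂ) * θ * Complex.I) by push_cast; ring]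
    rw [Complex.exp_add]; ring
  have hBint : ∀ j : ℕ, (∫ θ in (0:ℝ)..(2 * Real.pi), e θ * (starRingEnd ℂ) (q j * (sE θ) ^ j)) =
      if j = 0 then (if k = 0 then (2 * Real.pi : ℂ) else 0) else 0 := by
    intro j
    simp_rw [hGj j]
    rw [intervalIntegral.integral_const_mul, aux_circle]
    rcases eq_or_ne j 0 with h | h
    · subst h
      rcases eq_or_ne k 0 with h' | h'
      · subst h'; simp [hq0]
      · rw [if_neg (by omega), if_pos rfl, if_neg h', mul_zero]
    · rw [if_neg (by omega), if_neg h, mul_zero]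
  -- A
  have hA : (∫ θ in (0:ℝ)..(2 * Real.pi), e θ * D (sE θ)) =
      2 * Real.pi * (q k * (s : ℂ) ^ k) := by
    have hsw := aux_swap (F := fun j θ => e θ * (q j * (sE θ) ^ j)) (M := Mq)
      (fun j => (he_cont.mul ((continuous_const).mul (hsEcont.pow j))))
      (fun j θ _ => by
        rw [norm_mul, he_norm, one_mul, norm_mul, norm_pow, hsEnorm]
        exact hMq_bd j)
      hMq_sum (fun θ => ((hD (sE θ) (hsEball θ)).mul_left (e θ)))
    have h2 : HasSum (fun j : ℕ => ∫ θ in (0:ℝ)..(2 * Real.pi), e θ * (q j * (sE θ) ^ j))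
        (2 * Real.pi * (q k * (s : ℂ) ^ k)) := by
      have hfe : (fun j : ℕ => ∫ θ in (0:ℝ)..(2 * Real.pi), e θ * (q j * (sE θ) ^ j)) =
          fun j : ℕ => if j = k then 2 * Real.pi * (q k * (s : ℂ) ^ k) else 0 := funext hAint
      rw [hfe]; exact hasSum_ite_eq k _
    exact hsw.unique h2
  -- B
  have hB : (∫ θ in (0:ℝ)..(2 * Real.pi), e θ * (starRingEnd ℂ) (D (sE θ))) =
      (if k = 0 then (2 * Real.pi : ℂ) else 0) := by
    have hsw := aux_swap (F := fun j θ => e θ * (starRingEnd ℂ) (q j * (sE θ) ^ j)) (M := Mq)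
      (fun j => (he_cont.mul (Complex.continuous_conj.comp
        ((continuous_const).mul (hsEcont.pow j)))))
      (fun j θ _ => by
        rw [norm_mul, he_norm, one_mul, RCLike.norm_conj, norm_mul, norm_pow, hsEnorm]
        exact hMq_bd j)
      hMq_sum (fun θ => ((Complex.hasSum_conj'.mpr (hD (sE θ) (hsEball θ))).mul_left (e θ)))
    have h2 : HasSum (fun j : ℕ =>
        ∫ θ in (0:ℝ)..(2 * Real.pi), e θ * (starRingEnd ℂ) (q j * (sE θ) ^ j))
        (if k = 0 then (2 * Real.pi : ℂ) else 0) := by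
      have hfe : (fun j : ℕ =>
          ∫ θ in (0:ℝ)..(2 * Real.pi), e θ * (starRingEnd ℂ) (q j * (sE θ) ^ j)) =
          fun j : ℕ => if j = 0 then (if k = 0 then (2 * Real.pi : ℂ) else 0) else 0 :=
        funext hBint
      rw [hfe]; exact hasSum_ite_eq 0 _
    exact hsw.unique h2
  -- C
  have hC' : (∫ θ in (0:ℝ)..(2 * Real.pi), e θ) = (if k = 0 then (2 * Real.pi : ℂ) else 0) := by
    have : e = fun θ : ℝ => Complex.exp ((((-(k : ℤ)) : ℤ) : ℂ) * θ * Complex.I) := by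
      funext θ; simp only [he]; congr 1; push_cast; ring
    rw [this, aux_circle]
    rcases eq_or_ne k 0 with h | h
    · subst h; simp
    · rw [if_neg (by omega), if_neg h]
  -- split the integral
  have hsplit : (fun θ : ℝ => e θ *
      ((2 * (D (sE θ)).re - 1 : ℝ) : ℂ)) =
      fun θ => e θ * D (sE θ) + e θ * (starRingEnd ℂ) (D (sE θ)) - e θ := by
    funext θ
    have hx := Complex.add_conj (D (sE θ))
    push_cast
    rw [show ((2:ℂ) * ((D (sE θ)).re : ℂ) - 1) = (D (sE θ) + (starRingEnd ℂ) (D (sE θ))) - 1 by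
      rw [hx]; push_cast; ring]
    ring
  have hint1 : IntervalIntegrable (fun θ => e θ * D (sE θ)) MeasureTheory.volume 0 (2 * Real.pi) :=
    (he_cont.mul (hDD_cont)).intervalIntegrable _ _
  have hint2 : IntervalIntegrable (fun θ => e θ * (starRingEnd ℂ) (D (sE θ)))
      MeasureTheory.volume 0 (2 * Real.pi) :=
    (he_cont.mul (Complex.continuous_conj.comp hDD_cont)).intervalIntegrable _ _
  have hint3 : IntervalIntegrable e MeasureTheory.volume 0 (2 * Real.pi) :=
    he_cont.intervalIntegrable _ _
  calc (∫ θ in (0:ℝ)..(2 * Real.pi), e θ * ((2 * (D (sE θ)).re - 1 : ℝ) : ℂ))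
      = ∫ θ in (0:ℝ)..(2 * Real.pi),
          (e θ * D (sE θ) + e θ * (starRingEnd ℂ) (D (sE θ)) - e θ) := by
        rw [intervalIntegral.integral_congr (fun θ _ => congrFun hsplit θ)]
    _ = (∫ θ in (0:ℝ)..(2 * Real.pi), e θ * D (sE θ)) +
          (∫ θ in (0:ℝ)..(2 * Real.pi), e θ * (starRingEnd ℂ) (D (sE θ))) -
          (∫ θ in (0:ℝ)..(2 * Real.pi), e θ) := by
        rw [intervalIntegral.integral_sub (hint1.add hint2) hint3,
          intervalIntegral.integral_add hint1 hint2]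
    _ = 2 * Real.pi * (q k * (s : ℂ) ^ k) := by
        rw [hA, hB, hC']; ring

theorem convolution_in_R (p g : ℂ → ℂ) (pc b : ℕ → ℂ)
    (hpc0 : pc 0 = 1) (hb0 : b 0 = 0) (hb1 : b 1 = 1)
    (hp : ∀ z ∈ ball (0 : ℂ) 1, HasSum (fun n : ℕ => pc n * z ^ n) (p z))
    (hgsum : ∀ z ∈ ball (0 : ℂ) 1, HasSum (fun n : ℕ => b n * z ^ n) (g z))
    (hg : DifferentiableOn ℂ g (ball (0 : ℂ) 1))
    (hpre : ∀ z ∈ ball (0 : ℂ) 1, 0 < (p z).re)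
    (hgre : ∀ z ∈ ball (0 : ℂ) 1, 1 / 2 < (deriv g z).re)
    (u : ℂ → ℂ)
    (hu : ∀ z : ℂ, u z = z + ∑' n : ℕ, pc (n + 1) * b (n + 2) * z ^ (n + 2)) :
    ∀ z ∈ ball (0 : ℂ) 1, 0 < (deriv u z).re := by
  intro z hz
  have hz' : ‖z‖ < 1 := mem_ball_zero_iff.mp hz
  set r : ℝ := ‖z‖ with hrdef
  have hr0 : 0 ≤ r := norm_nonneg z
  set s : ℝ := (r + 1) / 2 with hsdef
  have hrs : r < s := by simp only [hsdef]; linarith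
  have hs1 : s < 1 := by simp only [hsdef]; linarith
  have hs0 : 0 < s := lt_of_le_of_lt hr0 hrs
  have hsC : (s : ℂ) ≠ 0 := by
    simp only [ne_eq, Complex.ofReal_eq_zero]; exact ne_of_gt hs0
  -- the coefficients of g'
  set qc : ℕ → ℂ := fun k => ((k : ℂ) + 1) * b (k + 1) with hqcdef
  have hQ : ∀ w ∈ ball (0:ℂ) 1, HasSum (fun k => qc k * w ^ k) (deriv g w) := by
    intro w hw
    exact aux_deriv hgsum hw
  have hq0 : qc 0 = 1 := by simp [hqcdef, hb1]
  -- the series for u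
  set c' : ℕ → ℂ := fun n => if n = 0 then 0 else if n = 1 then 1 else pc (n-1) * b n
    with hc'def
  have hU0 : ∀ y ∈ ball (0:ℂ) 1, HasSum (fun n => c' n * y ^ n) (u y) := by
    intro y hy
    have hy' : ‖y‖ < 1 := mem_ball_zero_iff.mp hy
    set t : ℝ := ‖y‖ with htdef
    have ht0 : 0 ≤ t := norm_nonneg y
    obtain ⟨ρ, hρ0, hρ1, htρ2⟩ : ∃ ρ : ℝ, 0 < ρ ∧ ρ < 1 ∧ t < ρ ^ 2 :=
      ⟨(t + 1) / 2, by linarith, by linarith, by nlinarith⟩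
    have hρball : (ρ : ℂ) ∈ ball (0:ℂ) 1 := by
      rw [mem_ball_zero_iff, Complex.norm_real, Real.norm_of_nonneg hρ0.le]; exact hρ1
    obtain ⟨Cp, hCp0, hCp⟩ := aux_coef_bound hρ0 (hp _ hρball).summable
    obtain ⟨Cb, hCb0, hCb⟩ := aux_coef_bound hρ0 (hgsum _ hρball).summable
    have hρne : ρ ≠ 0 := ne_of_gt hρ0
    have hx1 : t / ρ ^ 2 < 1 := by rw [div_lt_one (by positivity)]; exact htρ2
    have hsummable : Summable (fun n => pc (n+1) * b (n+2) * y ^ (n+2)) := by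
      apply Summable.of_norm_bounded
        (g := fun n => (Cp * Cb * ρ * (t / ρ^2)^2) * (t / ρ^2) ^ n)
      · exact (summable_geometric_of_lt_one (by positivity) hx1).mul_left _
      · intro n
        have h1 : ‖pc (n+1) * b (n+2) * y ^ (n+2)‖ = ‖pc (n+1)‖ * ‖b (n+2)‖ * t ^ (n+2) := by
          rw [norm_mul, norm_mul, norm_pow]
        have h2 : ‖pc (n+1)‖ * ‖b (n+2)‖ * t ^ (n+2) ≤
            (Cp / ρ^(n+1)) * (Cb / ρ^(n+2)) * t ^ (n+2) := by
          apply mul_le_mul_of_nonneg_right _ (by positivity)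
          apply mul_le_mul
          · rw [le_div_iff₀ (by positivity)]; exact hCp (n+1)
          · rw [le_div_iff₀ (by positivity)]; exact hCb (n+2)
          · exact norm_nonneg _
          · positivity
        have h3 : (Cp / ρ^(n+1)) * (Cb / ρ^(n+2)) * t ^ (n+2) =
            (Cp * Cb * ρ * (t / ρ^2)^2) * (t / ρ^2) ^ n := by
          rw [div_pow, div_pow, ← pow_mul, ← pow_mul]
          field_simp
          ring
        rw [h1]
        exact h2.trans (le_of_eq h3)
    have hS := hsummable.hasSum
    have hce : (fun n => c' (n+2) * y ^ (n+2)) = fun n => pc (n+1) * b (n+2) * y ^ (n+2) := by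
      funext n
      simp only [hc'def, if_neg (by omega : ¬ n + 2 = 0), if_neg (by omega : ¬ n + 2 = 1),
        show n + 2 - 1 = n + 1 from rfl]
    have hS2 : HasSum (fun n => c' (n+2) * y ^ (n+2))
        (∑' n, pc (n+1) * b (n+2) * y ^ (n+2)) := by rw [hce]; exact hS
    have hS3 := (hasSum_nat_add_iff (f := fun n => c' n * y ^ n) 2).mp hS2
    have hsum2 : (∑ i ∈ Finset.range 2, c' i * y ^ i) = y := by
      simp [Finset.sum_range_succ, hc'def]
    rw [hsum2] at hS3
    rw [hu y, add_comm]
    exact hS3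
  -- the Hadamard product series for u'
  have hUsum : HasSum (fun k => pc k * qc k * z ^ k) (deriv u z) := by
    have h1 := aux_deriv hU0 hz
    have h2 : (fun k : ℕ => ((k : ℂ) + 1) * c' (k+1) * z ^ k) =
        fun k => pc k * qc k * z ^ k := by
      funext k
      match k with
      | 0 => simp [hc'def, hqcdef, hpc0, hb1]
      | (m+1) =>
        simp only [hc'def, hqcdef, if_neg (by omega : ¬ m + 1 + 1 = 0),
          if_neg (by omega : ¬ m + 1 + 1 = 1), Nat.add_sub_cancel]
        push_cast
        ring
    rw [h2] at h1
    exact h1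
  -- Fourier coefficients of the positive weight
  have hF := aux_fourier hQ hq0 hs0 hs1
  set W : ℝ → ℝ := fun θ => 2 * (deriv g ((s : ℂ) * Complex.exp ((θ:ℂ) * Complex.I))).re - 1
    with hWdef
  have hsEball : ∀ θ : ℝ, (s : ℂ) * Complex.exp ((θ:ℂ) * Complex.I) ∈ ball (0:ℂ) 1 := by
    intro θ
    rw [mem_ball_zero_iff, norm_mul, Complex.norm_real, Real.norm_of_nonneg hs0.le,
      aux_exp_norm, mul_one]
    exact hs1
  have hWpos : ∀ θ, 0 < W θ := by
    intro θ
    have := hgre _ (hsEball θ)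
    simp only [hWdef]
    linarith
  -- continuity of W
  obtain ⟨ρq, hρq0, hρq1, hsρq⟩ : ∃ ρq : ℝ, 0 < ρq ∧ ρq < 1 ∧ s < ρq :=
    ⟨(s + 1) / 2, by linarith, by linarith, by linarith⟩
  have hρqball : (ρq : ℂ) ∈ ball (0:ℂ) 1 := by
    rw [mem_ball_zero_iff, Complex.norm_real, Real.norm_of_nonneg hρq0.le]; exact hρq1
  obtain ⟨Cq, hCq0, hCq⟩ := aux_coef_bound hρq0 (hQ _ hρqball).summable
  have hMq_sum : Summable (fun j => Cq * (s / ρq) ^ j) :=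
    (summable_geometric_of_lt_one (by positivity) (by rw [div_lt_one hρq0]; exact hsρq)).mul_left _
  have hMq_bd : ∀ j, ‖qc j‖ * s ^ j ≤ Cq * (s / ρq) ^ j := by
    intro j
    have hps : ρq * (s / ρq) = s := by field_simp
    calc ‖qc j‖ * s ^ j = ‖qc j‖ * (ρq * (s / ρq)) ^ j := by rw [hps]
      _ = ‖qc j‖ * ρq ^ j * (s / ρq) ^ j := by rw [mul_pow, mul_assoc]
      _ ≤ Cq * (s / ρq) ^ j := mul_le_mul_of_nonneg_right (hCq j) (by positivity)
  have hsEcont : Continuous fun θ : ℝ => (s : ℂ) * Complex.exp ((θ:ℂ) * Complex.I) :=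
    continuous_const.mul (Complex.continuous_exp.comp
      (Complex.continuous_ofReal.mul continuous_const))
  have hsEnorm : ∀ θ : ℝ, ‖(s : ℂ) * Complex.exp ((θ:ℂ) * Complex.I)‖ = s := by
    intro θ
    rw [norm_mul, Complex.norm_real, Real.norm_of_nonneg hs0.le, aux_exp_norm, mul_one]
  have hDgcont : Continuous fun θ : ℝ => deriv g ((s : ℂ) * Complex.exp ((θ:ℂ) * Complex.I)) := by
    have heq : (fun θ : ℝ => deriv g ((s : ℂ) * Complex.exp ((θ:ℂ) * Complex.I))) =
        fun θ : ℝ => ∑' j, qc j * ((s : ℂ) * Complex.exp ((θ:ℂ) * Complex.I)) ^ j :=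
      funext fun θ => ((hQ _ (hsEball θ)).tsum_eq).symm
    rw [heq]
    apply continuous_tsum (u := fun j => Cq * (s / ρq) ^ j)
      (fun j => continuous_const.mul (hsEcont.pow j)) hMq_sum
    intro j θ
    show ‖qc j * ((s : ℂ) * Complex.exp ((θ:ℂ) * Complex.I)) ^ j‖ ≤ _
    rw [norm_mul, norm_pow, hsEnorm]
    exact hMq_bd j
  have hWcont : Continuous W := by
    simp only [hWdef]
    exact (continuous_const.mul (Complex.continuous_re.comp hDgcont)).sub continuous_const
  -- the function E
  set E : ℝ → ℂ := fun θ => (z / s) * Complex.exp (-(θ:ℂ) * Complex.I) with hEdef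
  have hEnorm : ∀ θ, ‖E θ‖ = r / s := by
    intro θ
    simp only [hEdef]
    rw [norm_mul, show -(θ:ℂ) * Complex.I = ((-θ : ℝ) : ℂ) * Complex.I by push_cast; ring,
      aux_exp_norm, mul_one, norm_div, Complex.norm_real, Real.norm_of_nonneg hs0.le]
  have hrs1 : r / s < 1 := (div_lt_one hs0).mpr hrs
  have hrs0 : 0 ≤ r / s := by positivity
  have hEball : ∀ θ, E θ ∈ ball (0:ℂ) 1 := fun θ => by
    rw [mem_ball_zero_iff, hEnorm]; exact hrs1
  have hEcont : Continuous E :=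
    continuous_const.mul (Complex.continuous_exp.comp
      (Complex.continuous_ofReal.neg.mul continuous_const))
  -- bounds for pc
  obtain ⟨ρp, hρp0, hρp1, hrsρp⟩ : ∃ ρp : ℝ, 0 < ρp ∧ ρp < 1 ∧ r / s < ρp :=
    ⟨(r / s + 1) / 2, by linarith, by linarith, by linarith⟩
  have hρpball : (ρp : ℂ) ∈ ball (0:ℂ) 1 := by
    rw [mem_ball_zero_iff, Complex.norm_real, Real.norm_of_nonneg hρp0.le]; exact hρp1
  obtain ⟨Cp, hCp0, hCp⟩ := aux_coef_bound hρp0 (hp _ hρpball).summable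
  have hMp_sum : Summable (fun k => Cp * ((r / s) / ρp) ^ k) :=
    (summable_geometric_of_lt_one (by positivity)
      (by rw [div_lt_one hρp0]; exact hrsρp)).mul_left _
  have hMp_bd : ∀ k, ‖pc k‖ * (r / s) ^ k ≤ Cp * ((r / s) / ρp) ^ k := by
    intro k
    have hps : ρp * ((r / s) / ρp) = r / s := by field_simp
    calc ‖pc k‖ * (r / s) ^ k = ‖pc k‖ * (ρp * ((r / s) / ρp)) ^ k := by rw [hps]
      _ = ‖pc k‖ * ρp ^ k * ((r / s) / ρp) ^ k := by rw [mul_pow, mul_assoc]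
      _ ≤ Cp * ((r / s) / ρp) ^ k := mul_le_mul_of_nonneg_right (hCp k) (by positivity)
  have hPcont : Continuous fun θ => p (E θ) := by
    have heq : (fun θ => p (E θ)) = fun θ : ℝ => ∑' k, pc k * (E θ) ^ k :=
      funext fun θ => ((hp _ (hEball θ)).tsum_eq).symm
    rw [heq]
    apply continuous_tsum (u := fun k => Cp * ((r / s) / ρp) ^ k)
      (fun k => continuous_const.mul (hEcont.pow k)) hMp_sum
    intro k θ
    show ‖pc k * (E θ) ^ k‖ ≤ _
    rw [norm_mul, norm_pow, hEnorm]
    exact hMp_bd k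
  -- uniform bound on W over the interval
  obtain ⟨CW, hCW⟩ := (isCompact_Icc (a := (0:ℝ)) (b := 2*Real.pi)).exists_bound_of_continuousOn
    hWcont.continuousOn
  have h2pi0 : (0:ℝ) ≤ 2 * Real.pi := by positivity
  have hCW0 : 0 ≤ CW :=
    le_trans (norm_nonneg (W 0)) (hCW 0 ⟨le_refl _, h2pi0⟩)
  -- interchange sum and integral
  have hswap := aux_swap (F := fun k θ => pc k * (E θ) ^ k * ((W θ : ℝ) : ℂ))
    (M := fun k => Cp * ((r / s) / ρp) ^ k * CW)
    (fun k => (continuous_const.mul (hEcont.pow k)).mul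
      (Complex.continuous_ofReal.comp hWcont))
    (fun k θ hθ => by
      have hθ' : θ ∈ Set.Icc (0:ℝ) (2*Real.pi) := by
        rw [Set.uIoc_of_le h2pi0] at hθ
        exact Set.Ioc_subset_Icc_self hθ
      rw [norm_mul, norm_mul, norm_pow, hEnorm, Complex.norm_real]
      exact mul_le_mul (hMp_bd k) (hCW θ hθ') (norm_nonneg _) (by positivity))
    (hMp_sum.mul_right CW)
    (fun θ => (hp (E θ) (hEball θ)).mul_right ((W θ : ℝ) : ℂ))
  have hint : ∀ k, (∫ θ in (0:ℝ)..(2*Real.pi), pc k * (E θ) ^ k * ((W θ : ℝ) : ℂ)) =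
      2 * Real.pi * (pc k * qc k * z ^ k) := by
    intro k
    have hpt : ∀ θ : ℝ, pc k * (E θ) ^ k * ((W θ : ℝ) : ℂ) =
        (pc k * (z / s) ^ k) * (Complex.exp (-(k : ℂ) * θ * Complex.I) *
          ((2 * (deriv g ((s : ℂ) * Complex.exp ((θ:ℂ) * Complex.I))).re - 1 : ℝ) : ℂ)) := by
      intro θ
      simp only [hEdef, hWdef]
      rw [mul_pow, ← Complex.exp_nat_mul,
        show ((k:ℕ):ℂ) * (-(θ:ℂ) * Complex.I) = -(k : ℂ) * θ * Complex.I by push_cast; ring]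
      ring
    simp_rw [hpt]
    rw [intervalIntegral.integral_const_mul, hF k]
    have hzs : (z / (s:ℂ)) ^ k * (s:ℂ) ^ k = z ^ k := by
      rw [div_pow, div_mul_cancel₀]
      exact pow_ne_zero k hsC
    linear_combination (2 * (Real.pi:ℂ) * pc k * qc k) * hzs
  rw [funext hint] at hswap
  have h2π : HasSum (fun k => 2 * (Real.pi:ℂ) * (pc k * qc k * z ^ k))
      ((2 * (Real.pi:ℂ)) * deriv u z) := hUsum.mul_left _
  have hkey : (2 * (Real.pi:ℂ)) * deriv u z =
      ∫ θ in (0:ℝ)..(2*Real.pi), p (E θ) * ((W θ : ℝ) : ℂ) := h2π.unique hswap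
  -- take real parts
  have hIntf : IntervalIntegrable (fun θ => p (E θ) * ((W θ : ℝ) : ℂ))
      MeasureTheory.volume 0 (2*Real.pi) :=
    (hPcont.mul (Complex.continuous_ofReal.comp hWcont)).intervalIntegrable _ _
  have hre : 2 * Real.pi * (deriv u z).re =
      ∫ θ in (0:ℝ)..(2*Real.pi), (p (E θ)).re * W θ := by
    have h1 : ((2 * (Real.pi:ℂ)) * deriv u z).re = 2 * Real.pi * (deriv u z).re := by
      rw [show (2 * (Real.pi:ℂ)) = ((2 * Real.pi : ℝ) : ℂ) by push_cast; ring,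
        Complex.re_ofReal_mul]
    rw [← h1, hkey]
    calc (∫ θ in (0:ℝ)..(2*Real.pi), p (E θ) * ((W θ : ℝ) : ℂ)).re
        = Complex.reCLM (∫ θ in (0:ℝ)..(2*Real.pi), p (E θ) * ((W θ : ℝ) : ℂ)) := rfl
      _ = ∫ θ in (0:ℝ)..(2*Real.pi), Complex.reCLM (p (E θ) * ((W θ : ℝ) : ℂ)) :=
          (ContinuousLinearMap.intervalIntegral_comp_comm Complex.reCLM hIntf).symm
      _ = ∫ θ in (0:ℝ)..(2*Real.pi), (p (E θ)).re * W θ := by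
          apply intervalIntegral.integral_congr
          intro θ _
          show (p (E θ) * ((W θ : ℝ) : ℂ)).re = (p (E θ)).re * W θ
          rw [mul_comm, Complex.re_ofReal_mul, mul_comm]
  have hposint : 0 < ∫ θ in (0:ℝ)..(2*Real.pi), (p (E θ)).re * W θ := by
    apply intervalIntegral.intervalIntegral_pos_of_pos
    · exact ((Complex.continuous_re.comp hPcont).mul hWcont).intervalIntegrable _ _
    · intro θ
      exact mul_pos (hpre _ (hEball θ)) (hWpos θ)
    · exact Real.two_pi_pos
  rw [← hre] at hposint
  nlinarith [Real.pi_pos]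
end

section
/- Let α > 1 and μ > −1, and let Ψ(z) = z + 2∑_{n≥2} z^n/n. Then the function Ω^{α,μ}Ψ(z) = z + 2∑_{n≥2} [Γ(1/(μ+1)+α+1)·Γ(n/(μ+1)+1)] / [n·Γ(n/(μ+1)+α+1)·Γ(1/(μ+1)+1)] · z^n defines a bounded analytic function on the open unit disk. -/
open Complex Metric

private lemma omega_aux (A B C D N m : ℝ) (hA : 0 < A) (hC : 0 < C) (hD : 0 < D)
    (hN : 0 < N) (hm : 0 < m) (hB : 0 ≤ B) (hBC : B / C ≤ m / N) :
    A * B / (N * C * D) ≤ A / D * m / N ^ 2 := by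
  have h1 : A * B / (N * C * D) = A / D * (B / C) / N := by
    field_simp
    try ring
    try tauto
  rw [h1]
  have h2 : A / D * (B / C) ≤ A / D * (m / N) := by
    apply mul_le_mul_of_nonneg_left hBC (by positivity)
  calc A / D * (B / C) / N ≤ A / D * (m / N) / N := by gcongr
    _ = A / D * m / N ^ 2 := by field_simp

theorem omega_psi_bounded (α μ : ℝ) (hα : 1 < α) (hμ : -1 < μ)
    (g : ℂ → ℂ)
    (hg : ∀ z : ℂ, g z = z + 2 * ∑' n : ℕ,
      (((Real.Gamma (1 / (μ + 1) + α + 1) * Real.Gamma (((n + 2 : ℕ) : ℝ) / (μ + 1) + 1)) /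
          (((n + 2 : ℕ) : ℝ) * Real.Gamma (((n + 2 : ℕ) : ℝ) / (μ + 1) + α + 1) *
            Real.Gamma (1 / (μ + 1) + 1)) : ℝ) : ℂ) * z ^ (n + 2)) :
    DifferentiableOn ℂ g (ball (0 : ℂ) 1) ∧
    ∃ M : ℝ, ∀ z ∈ ball (0 : ℂ) 1, ‖g z‖ ≤ M := by
  have hμ1 : (0:ℝ) < μ + 1 := by linarith
  set θ : ℕ → ℝ := fun n =>
    (Real.Gamma (1 / (μ + 1) + α + 1) * Real.Gamma (((n + 2 : ℕ) : ℝ) / (μ + 1) + 1)) /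
      (((n + 2 : ℕ) : ℝ) * Real.Gamma (((n + 2 : ℕ) : ℝ) / (μ + 1) + α + 1) *
        Real.Gamma (1 / (μ + 1) + 1)) with hθ
  have hb : (0:ℝ) < Real.Gamma (1 / (μ + 1) + 1) :=
    Real.Gamma_pos_of_pos (by positivity)
  have ha : (0:ℝ) < Real.Gamma (1 / (μ + 1) + α + 1) :=
    Real.Gamma_pos_of_pos (by positivity)
  have hθpos : ∀ n, 0 < θ n := by
    intro n
    have hx : (0:ℝ) < ((n + 2 : ℕ) : ℝ) / (μ + 1) := by positivity
    have h1 : (0:ℝ) < Real.Gamma (((n + 2 : ℕ) : ℝ) / (μ + 1) + 1) :=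
      Real.Gamma_pos_of_pos (by linarith)
    have h2 : (0:ℝ) < Real.Gamma (((n + 2 : ℕ) : ℝ) / (μ + 1) + α + 1) :=
      Real.Gamma_pos_of_pos (by linarith)
    have hn2 : (0:ℝ) < ((n + 2 : ℕ) : ℝ) := by positivity
    exact div_pos (by positivity) (by positivity)
  obtain ⟨K, hKdef⟩ : ∃ K : ℝ, K = Real.Gamma (1 / (μ + 1) + α + 1) /
      Real.Gamma (1 / (μ + 1) + 1) * (μ + 1) := ⟨_, rfl⟩
  have hKpos : 0 < K := by rw [hKdef]; positivity
  have hθle : ∀ n, θ n ≤ K / ((n:ℝ) + 1) ^ 2 := by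
    intro n
    set x : ℝ := ((n + 2 : ℕ) : ℝ) / (μ + 1) with hxdef
    have hx : (0:ℝ) < x := by positivity
    have h1 : (0:ℝ) < Real.Gamma (x + 1) := Real.Gamma_pos_of_pos (by linarith)
    have h2 : (0:ℝ) < Real.Gamma (x + α + 1) := Real.Gamma_pos_of_pos (by linarith)
    have hn2 : (0:ℝ) < ((n + 2 : ℕ) : ℝ) := by positivity
    have hmono : Real.Gamma (x + 2) ≤ Real.Gamma (x + α + 1) := by
      apply le_of_lt
      apply Real.Gamma_strictMonoOn_Ici (by simp [Set.mem_Ici]; linarith)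
        (by simp [Set.mem_Ici]; linarith)
      linarith
    have hG2 : Real.Gamma (x + 2) = (x + 1) * Real.Gamma (x + 1) := by
      have h := Real.Gamma_add_one (s := x + 1) (by positivity)
      rw [show x + 2 = x + 1 + 1 by ring, h]
    have hratio : Real.Gamma (x + 1) / Real.Gamma (x + α + 1) ≤ 1 / (x + 1) := by
      rw [div_le_div_iff₀ h2 (by linarith)]
      calc Real.Gamma (x + 1) * (x + 1) = Real.Gamma (x + 2) := by rw [hG2]; ring
        _ ≤ Real.Gamma (x + α + 1) := hmono
        _ = 1 * Real.Gamma (x + α + 1) := by ring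
    have hinv : (1:ℝ) / (x + 1) ≤ (μ + 1) / ((n + 2 : ℕ) : ℝ) := by
      rw [div_le_div_iff₀ (by linarith) hn2]
      have hxl : ((n + 2 : ℕ) : ℝ) = x * (μ + 1) := by
        rw [hxdef]; field_simp
      nlinarith
    have key : θ n ≤ Real.Gamma (1 / (μ + 1) + α + 1) / Real.Gamma (1 / (μ + 1) + 1) *
        (μ + 1) / ((n + 2 : ℕ) : ℝ) ^ 2 := by
      have h := omega_aux (Real.Gamma (1 / (μ + 1) + α + 1)) (Real.Gamma (x + 1))
        (Real.Gamma (x + α + 1)) (Real.Gamma (1 / (μ + 1) + 1)) (((n + 2 : ℕ) : ℝ)) (μ + 1)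
        ha h2 hb hn2 hμ1 h1.le (hratio.trans hinv)
      rw [hθ]
      simpa [hxdef] using h
    calc θ n ≤ K / ((n + 2 : ℕ) : ℝ) ^ 2 := by rw [hKdef]; exact key
      _ ≤ K / ((n:ℝ) + 1) ^ 2 := by
          apply div_le_div_of_nonneg_left hKpos.le (by positivity)
          have h : ((n:ℝ) + 1) ≤ ((n + 2 : ℕ) : ℝ) := by push_cast; linarith
          nlinarith [Nat.cast_nonneg (α := ℝ) n]
  have hsum : Summable θ := by
    have h0 : Summable (fun n : ℕ => 1 / ((n:ℝ)) ^ 2) :=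
      (Real.summable_one_div_nat_pow (p := 2)).mpr (by norm_num)
    have h1 : Summable (fun n : ℕ => 1 / (((n + 1 : ℕ)):ℝ) ^ 2) :=
      (summable_nat_add_iff (f := fun n : ℕ => 1 / ((n:ℝ)) ^ 2) 1).mpr h0
    have h2 : Summable (fun n : ℕ => K / ((n:ℝ) + 1) ^ 2) := by
      have := h1.mul_left K
      simpa [div_eq_mul_inv] using this
    exact Summable.of_nonneg_of_le (fun n => (hθpos n).le) hθle h2
  have hbound : ∀ (n : ℕ) (z : ℂ), z ∈ ball (0:ℂ) 1 →
      ‖((θ n : ℝ) : ℂ) * z ^ (n + 2)‖ ≤ θ n := by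
    intro n z hz
    rw [mem_ball_zero_iff] at hz
    rw [norm_mul, Complex.norm_real, norm_pow, Real.norm_eq_abs,
      abs_of_pos (hθpos n)]
    have : ‖z‖ ^ (n + 2) ≤ 1 := pow_le_one₀ (norm_nonneg z) hz.le
    nlinarith [hθpos n]
  have hgfun : g = fun z : ℂ => z + 2 * ∑' n : ℕ, ((θ n : ℝ) : ℂ) * z ^ (n + 2) :=
    funext hg
  constructor
  · rw [hgfun]
    apply DifferentiableOn.add differentiableOn_id
    apply DifferentiableOn.const_mul
    exact differentiableOn_tsum_of_summable_norm hsum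
      (fun n => (differentiable_const _ |>.mul (differentiable_pow _)).differentiableOn)
      isOpen_ball hbound
  · refine ⟨1 + 2 * ∑' n, θ n, fun z hz => ?_⟩
    rw [hgfun]
    have hsumz : Summable (fun n : ℕ => ‖((θ n : ℝ) : ℂ) * z ^ (n + 2)‖) :=
      Summable.of_nonneg_of_le (fun n => norm_nonneg _) (fun n => hbound n z hz) hsum
    calc ‖z + 2 * ∑' n : ℕ, ((θ n : ℝ) : ℂ) * z ^ (n + 2)‖
        ≤ ‖z‖ + ‖(2:ℂ)‖ * ‖∑' n : ℕ, ((θ n : ℝ) : ℂ) * z ^ (n + 2)‖ := by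
          refine (norm_add_le _ _).trans ?_
          rw [norm_mul]
      _ ≤ 1 + 2 * ∑' n, θ n := by
          rw [mem_ball_zero_iff] at hz
          have h1 : ‖∑' n : ℕ, ((θ n : ℝ) : ℂ) * z ^ (n + 2)‖ ≤ ∑' n, θ n :=
            (norm_tsum_le_tsum_norm hsumz).trans
              (Summable.tsum_le_tsum (fun n => hbound n z (by rwa [mem_ball_zero_iff])) hsumz hsum)
          simp only [Complex.norm_ofNat]
          nlinarith [norm_nonneg z]
end
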